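/- arXiv:2404.07801 — 7 statements merged into one kernel-verified Lean document; each statement's English description precedes it below -/
import Mathlib

section
/- Let A_1, …, A_k be n × n matrices over a field K whose linear span contains an invertible matrix A. Then there exist diagonal matrices D_1, …, D_k and nonsingular matrices P, Q ∈ M_n(K) with A_i = P D_i Q for all i if and only if the k matrices A^{-1} A_i (i = 1, …, k) pairwise commute and are each diagonalizable over K. -/
set_option maxHeartbeats 1000000


open Matrix BigOperators

variable {K : Type*} [Field K]

/-- `T` equals the sum of `r` rank-one tensors with components `u i`, `v i`, `w i`. -/
def tensorDecomp {α β γ : Type*} [Fintype α] [Fintype β] [Fintype γ]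
    (T : α → β → γ → K) (r : ℕ)
    (u : Fin r → α → K) (v : Fin r → β → K) (w : Fin r → γ → K) : Prop :=
  ∀ i j k, T i j k = ∑ l, u l i * v l j * w l k

/-- The rank of a tensor: least number of rank-one summands. -/
noncomputable def tensorRank {α β γ : Type*} [Fintype α] [Fintype β] [Fintype γ]
    (T : α → β → γ → K) : ℕ :=
  sInf {r | ∃ u v w, tensorDecomp T r u v w}

/-- The `k`-th z-zSlice of a tensor. -/
def zSlice {α β : Type*} {p : ℕ} (T : α → β → Fin p → K) (k : Fin p) : Matrix α β K :=
  Matrix.of fun i j => T i j k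

/-- A matrix is diagonalizable if it is similar over `K` to a diagonal matrix. -/
def Diagonalizable {ι : Type*} [Fintype ι] [DecidableEq ι] (M : Matrix ι ι K) : Prop :=
  ∃ P : Matrix ι ι K, IsUnit P ∧ ∃ d : ι → K, M = P * Matrix.diagonal d * P⁻¹

private lemma aeval_unit_conj {n : ℕ} (P N : Matrix (Fin n) (Fin n) K) (hP : IsUnit P)
    (p : Polynomial K) :
    Polynomial.aeval (P * N * P⁻¹) p = P * Polynomial.aeval N p * P⁻¹ := by
  obtain ⟨u, rfl⟩ := hP
  rw [← Matrix.coe_units_inv]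
  induction p using Polynomial.induction_on' with
  | add p q hp hq => rw [map_add, map_add, hp, hq, Matrix.mul_add, Matrix.add_mul]
  | monomial k a =>
      rw [Polynomial.aeval_monomial, Polynomial.aeval_monomial, Units.conj_pow,
        ← Algebra.smul_def, ← Algebra.smul_def, Matrix.mul_smul, Matrix.smul_mul]

private lemma diagonalizable_semisimple {n : ℕ} {N : Matrix (Fin n) (Fin n) K}
    (h : Diagonalizable N) : Module.End.IsSemisimple (Matrix.mulVecLin N) := by
  classical
  obtain ⟨P, hP, d, rfl⟩ := h
  have hsep : (∏ μ ∈ Finset.image d Finset.univ,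
      (Polynomial.X - Polynomial.C μ)).Separable :=
    Polynomial.separable_prod_X_sub_C_iff'.mpr (fun x _ y _ h => h)
  apply Module.End.isSemisimple_of_squarefree_aeval_eq_zero hsep.squarefree
  set p : Polynomial K := ∏ μ ∈ Finset.image d Finset.univ,
      (Polynomial.X - Polynomial.C μ) with hp
  have haevald : Polynomial.aeval (d : Fin n → K) p = 0 := by
    funext i
    have h1 : Polynomial.aeval (d : Fin n → K) p i = Polynomial.aeval (d i) p := by
      have := Polynomial.aeval_algHom_apply (Pi.evalAlgHom K (fun _ : Fin n => K) i) d p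
      simpa using this.symm
    rw [Pi.zero_apply, h1, hp, map_prod]
    apply Finset.prod_eq_zero (Finset.mem_image_of_mem d (Finset.mem_univ i))
    simp
  have hdd : Polynomial.aeval (Matrix.diagonal d) p = 0 := by
    have h2 := Polynomial.aeval_algHom_apply (Matrix.diagonalAlgHom (n := Fin n) K) d p
    have h3 : (Matrix.diagonalAlgHom (n := Fin n) K) d = Matrix.diagonal d := rfl
    rw [h3] at h2
    rw [h2, haevald, map_zero]
  have h0 : Polynomial.aeval (P * Matrix.diagonal d * P⁻¹) p = 0 := by
    rw [aeval_unit_conj _ _ hP, hdd, Matrix.mul_zero, Matrix.zero_mul]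
  have hmv : Matrix.mulVecLin (P * Matrix.diagonal d * P⁻¹)
      = Matrix.toLinAlgEquiv' (P * Matrix.diagonal d * P⁻¹) := rfl
  rw [hmv, Polynomial.aeval_algHom_apply, h0, map_zero]

private lemma diagonalizable_iSup_eigenspace {n : ℕ} {N : Matrix (Fin n) (Fin n) K}
    (h : Diagonalizable N) :
    ⨆ μ, Module.End.eigenspace (Matrix.mulVecLin N) μ = ⊤ := by
  obtain ⟨P, hP, d, rfl⟩ := h
  have hPdet := (Matrix.isUnit_iff_isUnit_det P).mp hP
  have hPP : P * P⁻¹ = 1 := Matrix.mul_nonsing_inv P hPdet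
  have hPP' : P⁻¹ * P = 1 := Matrix.nonsing_inv_mul P hPdet
  rw [eq_top_iff]
  intro x _
  set y := P⁻¹ *ᵥ x with hy
  have hx : x = ∑ j, y j • (P *ᵥ Pi.single j 1) := by
    calc x = P *ᵥ y := by rw [hy, Matrix.mulVec_mulVec, hPP, Matrix.one_mulVec]
    _ = P.mulVecLin (∑ j, Pi.single j (y j)) := by
        rw [Finset.univ_sum_single, Matrix.mulVecLin_apply]
    _ = ∑ j, P.mulVecLin (Pi.single j (y j)) := map_sum _ _ _
    _ = ∑ j, y j • (P *ᵥ Pi.single j 1) := by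
        refine Finset.sum_congr rfl fun j _ => ?_
        rw [Matrix.mulVecLin_apply, Matrix.mulVec_single, Matrix.mulVec_single]
        funext i
        simp [mul_comm]
  rw [hx]
  refine Submodule.sum_mem _ fun j _ => Submodule.smul_mem _ _ ?_
  refine Submodule.mem_iSup_of_mem (d j) ?_
  rw [Module.End.mem_eigenspace_iff, Matrix.mulVecLin_apply, Matrix.mulVec_mulVec,
    Matrix.mul_assoc (P * Matrix.diagonal d) P⁻¹ P, hPP', Matrix.mul_one,
    ← Matrix.mulVec_mulVec, Matrix.diagonal_mulVec_single, Matrix.mulVec_single,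
    Matrix.mulVec_single]
  funext i
  simp [mul_comm, mul_left_comm]

private lemma conj_mul_conj {n : ℕ} (Q : Matrix (Fin n) (Fin n) K) (hQQ : Q * Q⁻¹ = 1)
    (a b : Fin n → K) :
    (Q⁻¹ * Matrix.diagonal a * Q) * (Q⁻¹ * Matrix.diagonal b * Q)
      = Q⁻¹ * Matrix.diagonal (fun j => a j * b j) * Q := by
  rw [← Matrix.diagonal_mul_diagonal]
  calc (Q⁻¹ * Matrix.diagonal a * Q) * (Q⁻¹ * Matrix.diagonal b * Q)
      = Q⁻¹ * Matrix.diagonal a * (Q * Q⁻¹) * (Matrix.diagonal b * Q) := by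
        simp only [Matrix.mul_assoc]
    _ = Q⁻¹ * (Matrix.diagonal a * Matrix.diagonal b) * Q := by
        rw [hQQ, Matrix.mul_one]
        simp only [Matrix.mul_assoc]

theorem simultaneous_diagonalization_by_equivalence
    {n k : ℕ} (A : Fin k → Matrix (Fin n) (Fin n) K)
    (M : Matrix (Fin n) (Fin n) K)
    (hM : M ∈ Submodule.span K (Set.range A)) (hMinv : IsUnit M) :
    (∃ (D : Fin k → Fin n → K) (P Q : Matrix (Fin n) (Fin n) K),
        IsUnit P ∧ IsUnit Q ∧ ∀ i, A i = P * Matrix.diagonal (D i) * Q) ↔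
    ((∀ i j, Commute (M⁻¹ * A i) (M⁻¹ * A j)) ∧
      ∀ i, Diagonalizable (M⁻¹ * A i)) := by
  have hMdet := (Matrix.isUnit_iff_isUnit_det M).mp hMinv
  constructor
  · rintro ⟨D, P, Q, hP, hQ, hA⟩
    have hPdet := (Matrix.isUnit_iff_isUnit_det P).mp hP
    have hQdet := (Matrix.isUnit_iff_isUnit_det Q).mp hQ
    obtain ⟨c, hc⟩ := (Submodule.mem_span_range_iff_exists_fun K).mp hM
    set d : Fin n → K := ∑ i, c i • D i with hd
    have hdiag : Matrix.diagonal d = ∑ i, c i • Matrix.diagonal (D i) := by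
      ext a b
      by_cases hab : a = b
      · subst hab
        simp [Matrix.diagonal_apply, hd, Matrix.sum_apply, Finset.sum_apply]
      · simp [Matrix.diagonal_apply, hab, Matrix.sum_apply]
    have hMeq : M = P * Matrix.diagonal d * Q := by
      rw [hdiag, Matrix.mul_sum, Finset.sum_mul, ← hc]
      refine Finset.sum_congr rfl fun i _ => ?_
      rw [hA i, Matrix.mul_smul, Matrix.smul_mul]
    have hdu : IsUnit (Matrix.diagonal d) := by
      have h1 : IsUnit (P * Matrix.diagonal d * Q) := hMeq ▸ hMinv
      rw [Matrix.isUnit_iff_isUnit_det, Matrix.det_mul, Matrix.det_mul] at h1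
      rw [Matrix.isUnit_iff_isUnit_det]
      exact (IsUnit.mul_iff.mp ((IsUnit.mul_iff.mp h1).1)).2
    have hdn : ∀ j, d j ≠ 0 := by
      rw [Matrix.isUnit_diagonal] at hdu
      exact fun j => (hdu.map (Pi.evalMonoidHom (fun _ : Fin n => K) j)).ne_zero
    have hMinv' : M⁻¹ = Q⁻¹ * Matrix.diagonal (fun j => (d j)⁻¹) * P⁻¹ := by
      have hri : (Matrix.diagonal d)⁻¹ = Matrix.diagonal (fun j => (d j)⁻¹) := by
        apply Matrix.inv_eq_right_inv
        rw [Matrix.diagonal_mul_diagonal]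
        have : (fun j => d j * (d j)⁻¹) = fun _ => (1 : K) :=
          funext fun j => mul_inv_cancel₀ (hdn j)
        rw [this, Matrix.diagonal_one]
      rw [hMeq, Matrix.mul_inv_rev, Matrix.mul_inv_rev, hri, ← Matrix.mul_assoc]
    have hPP' : P⁻¹ * P = 1 := Matrix.nonsing_inv_mul P hPdet
    have key : ∀ i, M⁻¹ * A i
        = Q⁻¹ * Matrix.diagonal (fun j => (d j)⁻¹ * D i j) * Q := by
      intro i
      rw [hMinv', hA i, ← Matrix.diagonal_mul_diagonal]
      calc Q⁻¹ * Matrix.diagonal (fun j => (d j)⁻¹) * P⁻¹ * (P * Matrix.diagonal (D i) * Q)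
          = Q⁻¹ * Matrix.diagonal (fun j => (d j)⁻¹) * (P⁻¹ * P) * (Matrix.diagonal (D i) * Q) := by
            simp only [Matrix.mul_assoc]
        _ = Q⁻¹ * (Matrix.diagonal (fun j => (d j)⁻¹) * Matrix.diagonal (D i)) * Q := by
            rw [hPP', Matrix.mul_one]
            simp only [Matrix.mul_assoc]
    have hQQ : Q * Q⁻¹ = 1 := Matrix.mul_nonsing_inv Q hQdet
    constructor
    · intro i j
      show _ * _ = _ * _
      have harr : (fun l => ((d l)⁻¹ * D i l) * ((d l)⁻¹ * D j l))
          = fun l => ((d l)⁻¹ * D j l) * ((d l)⁻¹ * D i l) := by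
        funext l; ring
      rw [key i, key j, conj_mul_conj Q hQQ, conj_mul_conj Q hQQ, harr]
    · intro i
      refine ⟨Q⁻¹, Matrix.isUnit_nonsing_inv_iff.mpr hQ, fun j => (d j)⁻¹ * D i j, ?_⟩
      rw [key i, Matrix.nonsing_inv_nonsing_inv Q hQdet]
  · rintro ⟨hcomm, hdiag⟩
    set N : Fin k → Matrix (Fin n) (Fin n) K := fun i => M⁻¹ * A i with hN
    set f : Fin k → Module.End K (Fin n → K) := fun i => Matrix.mulVecLin (N i) with hf
    have hfcomm : Pairwise fun i j => Commute (f i) (f j) := by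
      intro i j _
      have h1 : f i * f j = Matrix.mulVecLin (N i * N j) := by
        rw [Matrix.mulVecLin_mul]; rfl
      have h2 : f j * f i = Matrix.mulVecLin (N j * N i) := by
        rw [Matrix.mulVecLin_mul]; rfl
      show f i * f j = f j * f i
      rw [h1, h2, hcomm i j]
    have hss : ∀ i, (f i).IsFinitelySemisimple := fun i =>
      (diagonalizable_semisimple (hdiag i)).isFinitelySemisimple
    have hsup : ∀ i, ⨆ μ, (f i).maxGenEigenspace μ = ⊤ := by
      intro i
      have := diagonalizable_iSup_eigenspace (hdiag i)
      simp_rw [(hss i).maxGenEigenspace_eq_eigenspace]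
      exact this
    have htop := Module.End.iSup_iInf_maxGenEigenspace_eq_top_of_iSup_maxGenEigenspace_eq_top_of_commute
      f hfcomm hsup
    simp_rw [fun i => (hss i).maxGenEigenspace_eq_eigenspace] at htop
    rw [Submodule.iSup_eq_span] at htop
    have hsetle : (⊤ : Submodule K (Fin n → K)) ≤ Submodule.span K
        (⋃ χ : Fin k → K,
          ((⨅ i, (f i).eigenspace (χ i) : Submodule K (Fin n → K)) : Set (Fin n → K))) :=
      le_of_eq htop.symm
    haveI := FiniteDimensional.fintypeBasisIndex (Module.Basis.ofSpan hsetle)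
    set b := (Module.Basis.ofSpan hsetle).reindex
      ((Module.Basis.ofSpan hsetle).indexEquiv (Pi.basisFun K (Fin n))) with hb
    have hbmem : ∀ j : Fin n, ∃ χ : Fin k → K,
        ∀ i, (N i) *ᵥ (b j) = χ i • (b j) := by
      intro j
      have h1 : b j ∈ ⋃ χ : Fin k → K,
          ((⨅ i, (f i).eigenspace (χ i) : Submodule K (Fin n → K)) : Set (Fin n → K)) := by
        rw [hb, Module.Basis.reindex_apply]
        exact Module.Basis.ofSpan_subset hsetle ⟨_, rfl⟩
      obtain ⟨s, ⟨χ, rfl⟩, hs⟩ := h1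
      refine ⟨χ, fun i => ?_⟩
      have h3 : b j ∈ (f i).eigenspace (χ i) := by
        exact (Submodule.mem_iInf _).mp hs i
      rw [Module.End.mem_eigenspace_iff] at h3
      rw [← Matrix.mulVecLin_apply]
      exact h3
    choose χ hχ using hbmem
    set S : Matrix (Fin n) (Fin n) K := (Pi.basisFun K (Fin n)).toMatrix b with hS
    have hSunit : IsUnit S :=
      ⟨⟨S, b.toMatrix (Pi.basisFun K (Fin n)),
        Module.Basis.toMatrix_mul_toMatrix_flip _ _, Module.Basis.toMatrix_mul_toMatrix_flip _ _⟩, rfl⟩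
    have hSdet := (Matrix.isUnit_iff_isUnit_det S).mp hSunit
    have hScol : ∀ l j, S l j = b j l := by
      intro l j
      rw [hS, Module.Basis.toMatrix_apply, Pi.basisFun_repr]
    set D : Fin k → Fin n → K := fun i j => χ j i with hD
    have hNS : ∀ i, N i * S = S * Matrix.diagonal (D i) := by
      intro i
      ext r j
      have h4 : (N i * S) r j = ((N i) *ᵥ (b j)) r := by
        simp only [Matrix.mul_apply, Matrix.mulVec, dotProduct]
        exact Finset.sum_congr rfl fun l _ => by rw [hScol]
      rw [h4, hχ j i, Matrix.mul_diagonal, hScol]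
      simp [hD, mul_comm]
    have hfinal : ∀ i, A i = (M * S) * Matrix.diagonal (D i) * S⁻¹ := by
      intro i
      have h5 : A i = M * N i := by
        rw [hN, ← Matrix.mul_assoc, Matrix.mul_nonsing_inv M hMdet, Matrix.one_mul]
      have h6 : N i = S * Matrix.diagonal (D i) * S⁻¹ := by
        rw [← hNS i, Matrix.mul_assoc, Matrix.mul_nonsing_inv S hSdet, Matrix.mul_one]
      rw [h5, h6]
      simp only [Matrix.mul_assoc]
    exact ⟨D, M * S, S⁻¹, hMinv.mul hSunit, Matrix.isUnit_nonsing_inv_iff.mpr hSunit,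
      hfinal⟩
end

section
/- Let S be a tensor of format r × r × p over a field K whose slices Z_1, …, Z_p span a space containing an invertible matrix Z. Then the following are equivalent: (i) there exist vectors w_1, …, w_r ∈ K^p and two linearly independent families (u_1, …, u_r), (v_1, …, v_r) of vectors in K^r such that S = Σ_{i=1}^r u_i ⊗ v_i ⊗ w_i; (ii) the p matrices Z^{-1} Z_i pairwise commute and are diagonalizable over K. -/
open Matrix BigOperators

variable {K : Type*} [Field K]

section Aux
open Polynomial Module

lemma mul_diag_mul_apply {r : ℕ} (A B : Matrix (Fin r) (Fin r) K) (d : Fin r → K)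
    (i j : Fin r) : (A * Matrix.diagonal d * B) i j = ∑ l, A i l * d l * B l j := by
  rw [Matrix.mul_apply]
  refine Finset.sum_congr rfl fun l _ => ?_
  rw [Matrix.mul_diagonal]

/-- Columns of an invertible matrix `P` span everything, expressed via mulVec. -/
lemma span_cols_eq_top {r : ℕ} {P : Matrix (Fin r) (Fin r) K} (hP : IsUnit P) :
    Submodule.span K (Set.range fun l => (fun i => P i l)) = ⊤ := by
  rw [eq_top_iff]
  intro v _
  have hv : v = P *ᵥ (P⁻¹ *ᵥ v) := by
    rw [Matrix.mulVec_mulVec, Matrix.mul_nonsing_inv _ ((Matrix.isUnit_iff_isUnit_det P).mp hP),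
      Matrix.one_mulVec]
  have key : ∀ x : Fin r → K, P *ᵥ x = ∑ l, x l • (fun i => P i l) := by
    intro x
    funext i
    simp only [Matrix.mulVec, dotProduct, Finset.sum_apply, Pi.smul_apply, smul_eq_mul]
    exact Finset.sum_congr rfl fun l _ => mul_comm _ _
  rw [hv, key]
  exact Submodule.sum_smul_mem _ _ fun l _ => Submodule.subset_span ⟨l, rfl⟩

/-- A column of an invertible matrix is an eigenvector of `P * diagonal d * P⁻¹`. -/
lemma mulVec_col_eq {r : ℕ} {P : Matrix (Fin r) (Fin r) K} (hP : IsUnit P)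
    (d : Fin r → K) (l : Fin r) :
    (P * Matrix.diagonal d * P⁻¹) *ᵥ (fun i => P i l) = d l • fun i => P i l := by
  have h1 : (fun i => P i l) = P *ᵥ Pi.single l 1 := by
    funext i; simp [Matrix.mulVec_single]
  rw [h1, Matrix.mulVec_mulVec, Matrix.mul_assoc (P * Matrix.diagonal d),
    Matrix.nonsing_inv_mul _ ((Matrix.isUnit_iff_isUnit_det P).mp hP), Matrix.mul_one]
  funext i
  simp [Matrix.mulVec_single, Matrix.mul_diagonal, mul_comm]

lemma col_ne_zero {r : ℕ} {P : Matrix (Fin r) (Fin r) K} (hP : IsUnit P) (l : Fin r) :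
    (fun i => P i l) ≠ 0 := by
  intro h
  have h1 : (fun i => P i l) = P *ᵥ Pi.single l 1 := by
    funext i; simp [Matrix.mulVec_single]
  have h2 : P *ᵥ Pi.single l 1 = P *ᵥ 0 := by
    rw [← h1, h, Matrix.mulVec_zero]
  have h3 := Matrix.mulVec_injective_iff_isUnit.mpr hP h2
  have h4 := congr_fun h3 l
  rw [Pi.single_eq_same, Pi.zero_apply] at h4
  exact one_ne_zero h4

section Diag
variable {r : ℕ}

/-- The endomorphism of a diagonalizable matrix annihilates a squarefree split polynomial. -/
lemma diagonalizable_aeval_eq_zero {M : Matrix (Fin r) (Fin r) K}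
    {P : Matrix (Fin r) (Fin r) K} (hP : IsUnit P) {d : Fin r → K}
    (hM : M = P * Matrix.diagonal d * P⁻¹) :
    ∃ q : K[X], Squarefree q ∧ aeval (M.mulVecLin) q = 0 := by
  classical
  refine ⟨∏ μ ∈ Finset.image d Finset.univ, (X - C μ), ?_, ?_⟩
  · exact (Polynomial.separable_prod_X_sub_C_iff'.mpr
      (fun a _ b _ h => h)).squarefree
  · apply LinearMap.ext_on (span_cols_eq_top hP)
    rintro x ⟨l, rfl⟩
    have hev : Module.End.HasEigenvector (M.mulVecLin) (d l) (fun i => P i l) := by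
      refine ⟨Module.End.mem_eigenspace_iff.mpr ?_, col_ne_zero hP l⟩
      rw [Matrix.mulVecLin_apply, hM, mulVec_col_eq hP]
    rw [Module.End.aeval_apply_of_hasEigenvector hev, LinearMap.zero_apply]
    have : Polynomial.eval (d l) (∏ μ ∈ Finset.image d Finset.univ, (X - C μ)) = 0 := by
      rw [Polynomial.eval_prod]
      apply Finset.prod_eq_zero (Finset.mem_image_of_mem d (Finset.mem_univ l))
      simp
    rw [this, zero_smul]

lemma diagonalizable_maxGen_eq_eigen {M : Matrix (Fin r) (Fin r) K}
    (hM : Diagonalizable M) (μ : K) :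
    Module.End.maxGenEigenspace (M.mulVecLin : Module.End K (Fin r → K)) μ
      = Module.End.eigenspace (M.mulVecLin) μ := by
  obtain ⟨P, hP, d, hMd⟩ := hM
  obtain ⟨q, hq, hq0⟩ := diagonalizable_aeval_eq_zero hP hMd
  exact ((Module.End.isSemisimple_of_squarefree_aeval_eq_zero hq
    hq0).isFinitelySemisimple).maxGenEigenspace_eq_eigenspace μ

lemma diagonalizable_iSup_maxGen_eq_top {M : Matrix (Fin r) (Fin r) K}
    (hM : Diagonalizable M) :
    ⨆ μ, Module.End.maxGenEigenspace (M.mulVecLin : Module.End K (Fin r → K)) μ = ⊤ := by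
  obtain ⟨P, hP, d, hMd⟩ := hM
  rw [eq_top_iff, ← span_cols_eq_top hP, Submodule.span_le]
  rintro x ⟨l, rfl⟩
  refine Submodule.mem_iSup_of_mem (d l) ?_
  rw [← Module.End.iSup_genEigenspace_eq]
  refine Submodule.mem_iSup_of_mem 1 ?_
  have : (fun i => P i l) ∈ Module.End.eigenspace (M.mulVecLin) (d l) := by
    rw [Module.End.mem_eigenspace_iff, Matrix.mulVecLin_apply, hMd, mulVec_col_eq hP]
  simpa [Module.End.eigenspace] using this

end Diag

/-- Commuting diagonalizable matrices are simultaneously diagonalizable. -/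
lemma exists_simul_diag {r p : ℕ} (M : Fin p → Matrix (Fin r) (Fin r) K)
    (hcomm : ∀ k l, Commute (M k) (M l)) (hdiag : ∀ k, Diagonalizable (M k)) :
    ∃ P : Matrix (Fin r) (Fin r) K, IsUnit P ∧ ∃ d : Fin p → Fin r → K,
      ∀ k, M k = P * Matrix.diagonal (d k) * P⁻¹ := by
  classical
  set F : Fin p → Module.End K (Fin r → K) := fun k => (M k).mulVecLin with hF
  have hFmul : ∀ k l, F k * F l = ((M k) * (M l)).mulVecLin := by
    intro k l; rw [Matrix.mulVecLin_mul]; rfl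
  have hFcomm : ∀ k l, Commute (F k) (F l) := by
    intro k l
    unfold Commute SemiconjBy
    rw [hFmul, hFmul, (hcomm k l)]
  have hmax : ∀ k μ, Module.End.maxGenEigenspace (F k) μ = Module.End.eigenspace (F k) μ :=
    fun k μ => diagonalizable_maxGen_eq_eigen (hdiag k) μ
  have hTopEach : ∀ k, ⨆ μ, Module.End.maxGenEigenspace (F k) μ = ⊤ :=
    fun k => diagonalizable_iSup_maxGen_eq_top (hdiag k)
  have hTop : ⨆ χ : Fin p → K, ⨅ k, Module.End.maxGenEigenspace (F k) (χ k) = ⊤ :=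
    Module.End.iSup_iInf_maxGenEigenspace_eq_top_of_iSup_maxGenEigenspace_eq_top_of_commute
      F (fun i j _ => hFcomm i j) hTopEach
  have hIndep : iSupIndep fun χ : Fin p → K => ⨅ k, Module.End.maxGenEigenspace (F k) (χ k) :=
    Module.End.independent_iInf_maxGenEigenspace_of_forall_mapsTo F
      (fun i j φ => Module.End.mapsTo_maxGenEigenspace_of_comm (hFcomm j i) φ)
  set N : (Fin p → K) → Submodule K (Fin r → K) :=
    fun χ => ⨅ k, Module.End.maxGenEigenspace (F k) (χ k) with hN
  have hInt : DirectSum.IsInternal N :=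
    (DirectSum.isInternal_submodule_iff_iSupIndep_and_iSup_eq_top N).mpr ⟨hIndep, hTop⟩
  let bases : ∀ χ, Basis (Fin (Module.finrank K (N χ))) K (N χ) :=
    fun χ => Module.finBasis K (N χ)
  let b := hInt.collectedBasis bases
  haveI : Fintype (Σ χ : Fin p → K, Fin (Module.finrank K (N χ))) :=
    IsNoetherian.fintypeBasisIndex b
  have hcard : Fintype.card (Σ χ : Fin p → K, Fin (Module.finrank K (N χ))) = r := by
    have h1 := Module.finrank_eq_card_basis b
    rw [Module.finrank_pi, Fintype.card_fin] at h1
    exact h1.symm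
  let e := Fintype.equivFinOfCardEq hcard
  let b' := b.reindex e
  set P : Matrix (Fin r) (Fin r) K := Matrix.of (fun i l => b' l i) with hPdef
  have hPcols : ∀ l, (fun i => P i l) = b' l := fun l => rfl
  have hPunit : IsUnit P := by
    rw [← Matrix.linearIndependent_cols_iff_isUnit]
    have : P.col = fun l => b' l := rfl
    rw [this]
    exact b'.linearIndependent
  refine ⟨P, hPunit, fun k l => (e.symm l).1 k, fun k => ?_⟩
  have hMP : M k * P = P * Matrix.diagonal (fun l => (e.symm l).1 k) := by
    ext i l
    have hmem : (b' l : Fin r → K) ∈ N (e.symm l).1 := by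
      rw [Module.Basis.reindex_apply]
      exact hInt.collectedBasis_mem bases (e.symm l)
    have heig : F k (b' l) = ((e.symm l).1 k) • (b' l : Fin r → K) := by
      rw [← Module.End.mem_eigenspace_iff, ← hmax]
      exact (Submodule.mem_iInf _).mp hmem k
    have hlhs : (M k * P) i l = (M k *ᵥ (b' l : Fin r → K)) i := by
      simp only [Matrix.mul_apply, Matrix.mulVec, dotProduct]
      rfl
    rw [hlhs]
    have : M k *ᵥ (b' l : Fin r → K) = ((e.symm l).1 k) • (b' l : Fin r → K) := heig
    rw [this, Matrix.mul_diagonal]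
    simp only [Pi.smul_apply, smul_eq_mul]
    rw [mul_comm]
    rfl
  calc M k = M k * (P * P⁻¹) := by
        rw [Matrix.mul_nonsing_inv _ ((Matrix.isUnit_iff_isUnit_det P).mp hPunit),
          Matrix.mul_one]
    _ = (M k * P) * P⁻¹ := by rw [Matrix.mul_assoc]
    _ = P * Matrix.diagonal (fun l => (e.symm l).1 k) * P⁻¹ := by rw [hMP]


end Aux

theorem rank_r_decomposition_iff_commuting_diagonalizable
    {r p : ℕ} (S : Fin r → Fin r → Fin p → K)
    (Z : Matrix (Fin r) (Fin r) K)
    (hZ : Z ∈ Submodule.span K (Set.range fun k => zSlice S k))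
    (hZinv : IsUnit Z) :
    (∃ (w : Fin r → Fin p → K) (u v : Fin r → Fin r → K),
        LinearIndependent K u ∧ LinearIndependent K v ∧ tensorDecomp S r u v w) ↔
    ((∀ k l, Commute (Z⁻¹ * zSlice S k) (Z⁻¹ * zSlice S l)) ∧
      ∀ k, Diagonalizable (Z⁻¹ * zSlice S k)) := by
  constructor
  · rintro ⟨w, u, v, hu, hv, hdec⟩
    set A : Matrix (Fin r) (Fin r) K := Matrix.of (fun i l => u l i) with hAdef
    set B : Matrix (Fin r) (Fin r) K := Matrix.of (fun l j => v l j) with hBdef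
    have hA : IsUnit A := by
      rw [← Matrix.linearIndependent_cols_iff_isUnit]
      exact hu
    have hB : IsUnit B := by
      rw [← Matrix.linearIndependent_rows_iff_isUnit]
      exact hv
    have hslice : ∀ k, zSlice S k = A * Matrix.diagonal (fun l => w l k) * B := by
      intro k; ext i j
      rw [mul_diag_mul_apply]
      show S i j k = _
      rw [hdec i j k]
      refine Finset.sum_congr rfl fun l _ => ?_
      simp only [hAdef, hBdef, Matrix.of_apply]
      ring
    obtain ⟨c, hc⟩ := (Submodule.mem_span_range_iff_exists_fun K).mp hZ
    set D : Fin r → K := fun l => ∑ k, c k * w l k with hDdef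
    have hZeq : Z = A * Matrix.diagonal D * B := by
      ext i j
      rw [mul_diag_mul_apply, ← hc]
      have h1 : (∑ k, c k • zSlice S k) i j = ∑ k, c k * S i j k := by
        simp [Matrix.sum_apply, zSlice]
      rw [h1]
      have h2 : ∀ k, c k * S i j k = ∑ l, A i l * (c k * w l k) * B l j := by
        intro k
        rw [hdec i j k, Finset.mul_sum]
        refine Finset.sum_congr rfl fun l _ => ?_
        simp only [hAdef, hBdef, Matrix.of_apply]
        ring
      rw [Finset.sum_congr rfl fun k _ => h2 k, Finset.sum_comm]
      refine Finset.sum_congr rfl fun l _ => ?_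
      rw [hDdef]
      simp only [Finset.sum_mul, Finset.mul_sum]
    have hAdet := (Matrix.isUnit_iff_isUnit_det A).mp hA
    have hBdet := (Matrix.isUnit_iff_isUnit_det B).mp hB
    have hDunit : IsUnit (Matrix.diagonal D) := by
      have : Matrix.diagonal D = A⁻¹ * Z * B⁻¹ := by
        rw [hZeq, Matrix.mul_assoc A, ← Matrix.mul_assoc A⁻¹,
          Matrix.nonsing_inv_mul _ hAdet, Matrix.one_mul, Matrix.mul_assoc,
          Matrix.mul_nonsing_inv _ hBdet, Matrix.mul_one]
      rw [this]
      exact ((Matrix.isUnit_nonsing_inv_iff.mpr hA).mul hZinv).mul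
        (Matrix.isUnit_nonsing_inv_iff.mpr hB)
    have hDl : ∀ l, D l ≠ 0 := by
      have h := Matrix.isUnit_diagonal.mp hDunit
      intro l
      exact isUnit_iff_ne_zero.mp (h.map (Pi.evalMonoidHom (fun _ => K) l))
    have hZinveq : Z⁻¹ = B⁻¹ * (Matrix.diagonal D)⁻¹ * A⁻¹ := by
      rw [hZeq, Matrix.mul_inv_rev, Matrix.mul_inv_rev, Matrix.mul_assoc]
    have hkey : ∀ k, Z⁻¹ * zSlice S k
        = B⁻¹ * Matrix.diagonal (fun l => (D l)⁻¹ * w l k) * B := by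
      intro k
      have hDinv : (Matrix.diagonal D)⁻¹ = Matrix.diagonal (fun l => (D l)⁻¹) := by
        apply Matrix.inv_eq_right_inv
        rw [Matrix.diagonal_mul_diagonal]
        have h1 : (fun l => D l * (D l)⁻¹) = fun _ => (1 : K) :=
          funext fun l => mul_inv_cancel₀ (hDl l)
        rw [h1, Matrix.diagonal_one]
      rw [hZinveq, hslice k, hDinv]
      simp only [Matrix.mul_assoc]
      rw [Matrix.nonsing_inv_mul_cancel_left _ _ hAdet,
        ← Matrix.mul_assoc (Matrix.diagonal _) (Matrix.diagonal _) B,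
        Matrix.diagonal_mul_diagonal]
    have hconj : ∀ d₁ d₂ : Fin r → K,
        (B⁻¹ * Matrix.diagonal d₁ * B) * (B⁻¹ * Matrix.diagonal d₂ * B)
          = B⁻¹ * Matrix.diagonal (fun l => d₁ l * d₂ l) * B := by
      intro d₁ d₂
      simp only [Matrix.mul_assoc]
      rw [Matrix.mul_nonsing_inv_cancel_left _ _ hBdet,
        ← Matrix.mul_assoc (Matrix.diagonal d₁) (Matrix.diagonal d₂) B,
        Matrix.diagonal_mul_diagonal]
    constructor
    · intro k l
      unfold Commute SemiconjBy
      rw [hkey k, hkey l, hconj, hconj]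
      have heq : (fun m => ((D m)⁻¹ * w m k) * ((D m)⁻¹ * w m l))
          = fun m => ((D m)⁻¹ * w m l) * ((D m)⁻¹ * w m k) := by
        funext m; ring
      rw [heq]
    · intro k
      refine ⟨B⁻¹, Matrix.isUnit_nonsing_inv_iff.mpr hB, fun l => (D l)⁻¹ * w l k, ?_⟩
      rw [hkey k, Matrix.nonsing_inv_nonsing_inv _ hBdet]
  · rintro ⟨hcomm, hdiag⟩
    obtain ⟨P, hPunit, d, hPd⟩ := exists_simul_diag (fun k => Z⁻¹ * zSlice S k) hcomm hdiag
    have hZdet := (Matrix.isUnit_iff_isUnit_det Z).mp hZinv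
    have hPdet := (Matrix.isUnit_iff_isUnit_det P).mp hPunit
    have hslice : ∀ k, zSlice S k = (Z * P) * Matrix.diagonal (d k) * P⁻¹ := by
      intro k
      have : Z * (Z⁻¹ * zSlice S k) = zSlice S k := by
        rw [← Matrix.mul_assoc, Matrix.mul_nonsing_inv _ hZdet, Matrix.one_mul]
      rw [← this, hPd k]
      simp only [Matrix.mul_assoc]
    refine ⟨fun l k => d k l, fun l => fun i => (Z * P) i l, fun l => fun j => P⁻¹ l j,
      ?_, ?_, ?_⟩
    · have h := Matrix.linearIndependent_cols_iff_isUnit.mpr (hZinv.mul hPunit)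
      exact h
    · have h := Matrix.linearIndependent_rows_iff_isUnit.mpr
        (Matrix.isUnit_nonsing_inv_iff.mpr hPunit)
      exact h
    · intro i j k
      have h1 : S i j k = zSlice S k i j := rfl
      rw [h1, hslice k, mul_diag_mul_apply]
      exact Finset.sum_congr rfl fun l _ => by ring
end

section
/- Let T be a tensor of rank r and format n × n × p over an infinite field K, and suppose the span of the slices T_1, …, T_p contains an invertible matrix. Fix a rank-r decomposition T = Σ_{i=1}^r u_i ⊗ v_i ⊗ w_i, with U, V the r × n matrices of rows u_i, v_i, so that T_k = Uᵀ D_k V with D_k = diag(w_{1k}, …, w_{rk}). Then there exists an invertible A = Σ_k λ_k T_k in the span of the slices such that the diagonal matrix D = Σ_k λ_k D_k has rank r; and for any such A, the p-tuple (A^{-1}T_1, …, A^{-1}T_p) admits a commuting extension (Z_1, …, Z_p) of size r with all Z_i diagonalizable over K. -/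
open Matrix BigOperators

variable {K : Type*} [Field K]

lemma combo_slices {n p r : ℕ} {T : Fin n → Fin n → Fin p → K}
    {u v : Fin r → Fin n → K} {w : Fin r → Fin p → K} (hT : tensorDecomp T r u v w)
    (c : Fin p → K) :
    ∑ k, c k • zSlice T k =
      (Matrix.of u)ᵀ * Matrix.diagonal (fun l => ∑ k, c k * w l k) * Matrix.of v := by
  ext i j
  simp only [Matrix.sum_apply, Matrix.smul_apply, zSlice, Matrix.of_apply, smul_eq_mul,
    Matrix.mul_apply, Matrix.diagonal_apply, Matrix.transpose_apply, hT i j,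
    mul_ite, mul_zero, ite_mul, zero_mul, Finset.sum_ite_eq, Finset.sum_ite_eq',
    Finset.mem_univ, if_true, Finset.mul_sum, Finset.sum_mul]
  rw [Finset.sum_comm]
  exact Finset.sum_congr rfl fun l _ => Finset.sum_congr rfl fun k _ => by ring

lemma single_slice {n p r : ℕ} {T : Fin n → Fin n → Fin p → K}
    {u v : Fin r → Fin n → K} {w : Fin r → Fin p → K} (hT : tensorDecomp T r u v w)
    (k : Fin p) :
    zSlice T k = (Matrix.of u)ᵀ * Matrix.diagonal (fun l => w l k) * Matrix.of v := by
  have h := combo_slices hT (Pi.single k (1 : K))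
  simpa [Pi.single_apply, ite_smul, zero_smul, ite_mul, zero_mul, one_mul,
    Finset.sum_ite_eq, Finset.sum_ite_eq'] using h

theorem exists_diagonalizable_commuting_extension_of_rank_decomposition
    {n p r : ℕ} [Infinite K] (T : Fin n → Fin n → Fin p → K)
    (hrank : tensorRank T = r)
    (hinv : ∃ A ∈ Submodule.span K (Set.range fun k => zSlice T k), IsUnit A)
    (u : Fin r → Fin n → K) (v : Fin r → Fin n → K) (w : Fin r → Fin p → K)
    (hT : tensorDecomp T r u v w) :
    ∃ hnr : n ≤ r,
      (∃ lam : Fin p → K,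
          IsUnit (∑ k, lam k • zSlice T k) ∧ ∀ i, (∑ k, lam k * w i k) ≠ 0) ∧
      ∀ lam : Fin p → K, IsUnit (∑ k, lam k • zSlice T k) →
        (∀ i, (∑ k, lam k * w i k) ≠ 0) →
        ∃ Z : Fin p → Matrix (Fin r) (Fin r) K,
          (∀ i j, Commute (Z i) (Z j)) ∧
          (∀ k, (Z k).submatrix (Fin.castLE hnr) (Fin.castLE hnr) =
            (∑ l, lam l • zSlice T l)⁻¹ * zSlice T k) ∧
          ∀ k, Diagonalizable (Z k) := by
  classical
  obtain ⟨A0, hA0mem, hA0unit⟩ := hinv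
  obtain ⟨c, hc⟩ := (Submodule.mem_span_range_iff_exists_fun K).mp hA0mem
  -- n ≤ r
  have hnr : n ≤ r := by
    have h1 : A0.rank = n := by rw [Matrix.rank_of_isUnit A0 hA0unit, Fintype.card_fin]
    have h2 : A0.rank ≤ r := by
      rw [← hc, combo_slices hT c]
      refine le_trans (Matrix.rank_mul_le_left _ _) (le_trans (Matrix.rank_mul_le_left _ _) ?_)
      simpa using ((Matrix.of u)ᵀ).rank_le_card_width
    omega
  -- every w i is nonzero
  have hw : ∀ i, ∃ k, w i k ≠ 0 := by
    intro i
    by_contra h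
    push_neg at h
    obtain ⟨m, rfl⟩ : ∃ m, r = m + 1 := ⟨r - 1, by have := i.pos; omega⟩
    have hdec : tensorDecomp T m (fun l => u (i.succAbove l)) (fun l => v (i.succAbove l))
        (fun l => w (i.succAbove l)) := by
      intro a b k
      rw [hT a b k, Fin.sum_univ_succAbove _ i]
      simp [h]
    have hle : tensorRank T ≤ m := Nat.sInf_le ⟨_, _, _, hdec⟩
    omega
  -- polynomial argument
  set Mp : Matrix (Fin n) (Fin n) (MvPolynomial (Fin p) K) :=
    Matrix.of fun i j => ∑ k, MvPolynomial.C (T i j k) * MvPolynomial.X k with hMp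
  have hevalM : ∀ lamv : Fin p → K,
      Mp.map (MvPolynomial.eval lamv) = ∑ k, lamv k • zSlice T k := by
    intro lamv
    ext i j
    simp [hMp, zSlice, Matrix.sum_apply, mul_comm]
  have hevalP : ∀ lamv : Fin p → K,
      MvPolynomial.eval lamv Mp.det = (∑ k, lamv k • zSlice T k).det := by
    intro lamv
    rw [RingHom.map_det, RingHom.mapMatrix_apply, hevalM]
  set L : Fin r → MvPolynomial (Fin p) K :=
    fun i => ∑ k, MvPolynomial.C (w i k) * MvPolynomial.X k with hL
  have hevalL : ∀ (lamv : Fin p → K) i,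
      MvPolynomial.eval lamv (L i) = ∑ k, lamv k * w i k := by
    intro lamv i
    simp [hL, mul_comm]
  have hPne : Mp.det ≠ 0 := by
    intro h0
    have := hevalP c
    rw [h0, hc] at this
    simp only [map_zero] at this
    exact (isUnit_iff_ne_zero.mp ((Matrix.isUnit_iff_isUnit_det A0).mp hA0unit)) this.symm
  have hLne : ∀ i, L i ≠ 0 := by
    intro i h0
    obtain ⟨k0, hk0⟩ := hw i
    have h1 := hevalL (Pi.single k0 (1 : K)) i
    rw [h0, map_zero] at h1
    have h2 : ∑ k, (Pi.single k0 (1:K) : Fin p → K) k * w i k = w i k0 := by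
      simp [Pi.single_apply]
    exact hk0 (by rw [← h2, ← h1])
  obtain ⟨lam0, hlam0⟩ : ∃ x : Fin p → K,
      MvPolynomial.eval x (Mp.det * ∏ i, L i) ≠ 0 := by
    by_contra h
    push_neg at h
    have : (Mp.det * ∏ i, L i) = 0 :=
      MvPolynomial.funext fun x => by simpa using h x
    exact (mul_ne_zero hPne (Finset.prod_ne_zero_iff.mpr fun i _ => hLne i)) this
  rw [_root_.map_mul, map_prod] at hlam0
  have hdet0 : MvPolynomial.eval lam0 Mp.det ≠ 0 := fun h => hlam0 (by rw [h, zero_mul])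
  have hprod0 : ∀ i, MvPolynomial.eval lam0 (L i) ≠ 0 := by
    intro i hi
    exact hlam0 (by rw [Finset.prod_eq_zero (Finset.mem_univ i) hi, mul_zero])
  refine ⟨hnr, ⟨lam0, ?_, fun i => by rw [← hevalL]; exact hprod0 i⟩, ?_⟩
  · exact (Matrix.isUnit_iff_isUnit_det _).mpr (isUnit_iff_ne_zero.mpr (by
      rw [← hevalP]; exact hdet0))
  -- main construction
  intro lam hUnit hd
  set Ut : Matrix (Fin n) (Fin r) K := (Matrix.of u)ᵀ with hUt
  set Vm : Matrix (Fin r) (Fin n) K := Matrix.of v with hVm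
  set d : Fin r → K := fun l => ∑ k, lam k * w l k with hdd
  set A : Matrix (Fin n) (Fin n) K := ∑ k, lam k • zSlice T k with hAdef
  have hdetA : IsUnit A.det := (Matrix.isUnit_iff_isUnit_det A).mp hUnit
  have hA : A = Ut * Matrix.diagonal d * Vm := combo_slices hT lam
  set B : Matrix (Fin n) (Fin r) K := A⁻¹ * Ut * Matrix.diagonal d with hB
  have hBV : B * Vm = 1 := by
    rw [hB, Matrix.mul_assoc, Matrix.mul_assoc, ← Matrix.mul_assoc Ut, ← hA,
      Matrix.nonsing_inv_mul A hdetA]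
  have hBsurj : Function.Surjective B.mulVecLin := by
    intro y
    exact ⟨Vm.mulVec y, by
      rw [Matrix.mulVecLin_apply, Matrix.mulVec_mulVec, hBV, Matrix.one_mulVec]⟩
  have hkerrank : Module.finrank K (LinearMap.ker B.mulVecLin) = r - n := by
    have h1 := LinearMap.finrank_range_add_finrank_ker B.mulVecLin
    rw [LinearMap.range_eq_top.mpr hBsurj, finrank_top, Module.finrank_fin_fun,
      Module.finrank_fin_fun] at h1
    omega
  let bas : Module.Basis (Fin (r - n)) K (LinearMap.ker B.mulVecLin) :=
    Module.finBasisOfFinrankEq K _ hkerrank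
  let e : Fin n ⊕ Fin (r - n) ≃ Fin r := finSumFinEquiv.trans (finCongr (by omega))
  set Qm : Matrix (Fin r) (Fin r) K :=
    Matrix.of fun a j =>
      Sum.elim (fun i0 => Vm a i0) (fun b => (bas b : Fin r → K) a) (e.symm j) with hQm
  have hQV : ∀ (a : Fin r) (j : Fin n), Qm a (e (Sum.inl j)) = Vm a j := by
    intro a j; simp [hQm]
  have hQC : ∀ (a : Fin r) (b : Fin (r - n)),
      Qm a (e (Sum.inr b)) = (bas b : Fin r → K) a := by
    intro a b; simp [hQm]
  have hcast : ∀ j : Fin n, e (Sum.inl j) = Fin.castLE hnr j := by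
    intro j; ext; simp [e]
  have henr : ∀ b : Fin (r - n), ((e (Sum.inr b)) : ℕ) = n + b := by
    intro b; simp [e]
  have hBbas : ∀ b, B.mulVec ((bas b : Fin r → K)) = 0 := by
    intro b
    have hmem := (bas b).2
    rw [LinearMap.mem_ker] at hmem
    rw [← Matrix.mulVecLin_apply]
    exact hmem
  have hQinj : Function.Injective Qm.mulVec := by
    have hker0 : ∀ x, Qm.mulVec x = 0 → x = 0 := by
      intro x hx
      set y : Fin n → K := fun i0 => x (e (Sum.inl i0)) with hy
      set z : Fin (r - n) → K := fun b => x (e (Sum.inr b)) with hz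
      have hsplit : Vm.mulVec y + ∑ b, z b • (bas b : Fin r → K) = 0 := by
        rw [← hx]
        funext a
        have h4 : Qm.mulVec x a = ∑ s : Fin n ⊕ Fin (r - n), Qm a (e s) * x (e s) := by
          rw [Matrix.mulVec, dotProduct,
            ← Equiv.sum_comp e (fun j => Qm a j * x j)]
        rw [h4, Fintype.sum_sum_type]
        simp only [hQV, hQC, Pi.add_apply, Matrix.mulVec, dotProduct,
          Finset.sum_apply, Pi.smul_apply, smul_eq_mul, hy, hz]
        congr 1
        exact Finset.sum_congr rfl fun b _ => mul_comm _ _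
      have hy0 : y = 0 := by
        have h3 := congrArg B.mulVecLin hsplit
        rw [map_add, _root_.map_sum, map_zero] at h3
        simp only [_root_.map_smul] at h3
        have h5 : ∀ b : Fin (r - n), B.mulVecLin ((bas b : Fin r → K)) = 0 := by
          intro b; rw [Matrix.mulVecLin_apply, hBbas]
        simp only [h5, smul_zero, Finset.sum_const_zero, add_zero] at h3
        rw [Matrix.mulVecLin_apply, Matrix.mulVec_mulVec, hBV, Matrix.one_mulVec] at h3
        exact h3
      have hsum0 : ∑ b, z b • (bas b : Fin r → K) = 0 := by
        rw [hy0] at hsplit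
        simpa using hsplit
      have hz0 : z = 0 := by
        have hcoe : ((∑ b, z b • bas b : LinearMap.ker B.mulVecLin) : Fin r → K)
            = ∑ b, z b • (bas b : Fin r → K) := by
          push_cast
          rfl
        have h6 : (∑ b, z b • bas b : LinearMap.ker B.mulVecLin) = 0 :=
          Subtype.ext (by rw [hcoe, hsum0]; rfl)
        have h7 := Fintype.linearIndependent_iff.mp bas.linearIndependent z h6
        funext b; exact h7 b
      funext j
      obtain ⟨s, rfl⟩ := e.surjective j
      cases s with
      | inl i0 => exact congrFun hy0 i0
      | inr b => exact congrFun hz0 b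
    intro x1 x2 h12
    have h := hker0 (x1 - x2) (by rw [Matrix.mulVec_sub, h12, sub_self])
    exact sub_eq_zero.mp h
  have hQunit : IsUnit Qm := Matrix.mulVec_injective_iff_isUnit.mp hQinj
  have hdetQ : IsUnit Qm.det := (Matrix.isUnit_iff_isUnit_det Qm).mp hQunit
  have hBQ : B * Qm = (1 : Matrix (Fin r) (Fin r) K).submatrix (Fin.castLE hnr) id := by
    ext i j
    obtain ⟨s, rfl⟩ := e.surjective j
    cases s with
    | inl j0 =>
        have h8 : (B * Qm) i (e (Sum.inl j0)) = (B * Vm) i j0 := by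
          simp [Matrix.mul_apply, hQV]
        rw [h8, hBV, Matrix.submatrix_apply, hcast, id]
        simp only [Matrix.one_apply]
        by_cases hij : i = j0
        · subst hij; simp
        · rw [if_neg hij, if_neg (fun h => hij (by
            have := congrArg Fin.val h
            exact Fin.ext this))]
    | inr b =>
        have h8 : (B * Qm) i (e (Sum.inr b)) = B.mulVec ((bas b : Fin r → K)) i := by
          simp [Matrix.mul_apply, hQC, Matrix.mulVec, dotProduct]
        rw [h8, hBbas, Matrix.submatrix_apply, id]
        rw [Matrix.one_apply, if_neg]
        · rfl
        · intro heq
          have h9 := congrArg Fin.val heq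
          rw [henr] at h9
          simp only [Fin.coe_castLE] at h9
          have h10 := i.isLt
          omega
  have hrowB : ∀ (i : Fin n) (a : Fin r), Qm⁻¹ (Fin.castLE hnr i) a = B i a := by
    intro i a
    have h1 : B = ((1 : Matrix (Fin r) (Fin r) K).submatrix (Fin.castLE hnr) id) * Qm⁻¹ := by
      rw [← hBQ, Matrix.mul_assoc, Matrix.mul_nonsing_inv Qm hdetQ, Matrix.mul_one]
    rw [h1]
    simp [Matrix.mul_apply, Matrix.submatrix_apply, Matrix.one_apply, ite_mul, zero_mul,
      Finset.sum_ite_eq]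
  have hcolV : ∀ (a : Fin r) (j : Fin n), Qm a (Fin.castLE hnr j) = Vm a j := by
    intro a j; rw [← hcast]; exact hQV a j
  have hdiag : ∀ k : Fin p,
      Matrix.diagonal d * Matrix.diagonal (fun l => w l k * (d l)⁻¹)
        = Matrix.diagonal (fun l => w l k) := by
    intro k
    have h0 : (fun l => d l * (w l k * (d l)⁻¹)) = fun l => w l k := by
      funext l
      have hdl : d l ≠ 0 := hd l
      rw [mul_comm (w l k) ((d l)⁻¹), ← mul_assoc, mul_inv_cancel₀ hdl, one_mul]
    rw [Matrix.diagonal_mul_diagonal, h0]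
  have hBNV : ∀ k, A⁻¹ * zSlice T k
      = B * Matrix.diagonal (fun l => w l k * (d l)⁻¹) * Vm := by
    intro k
    rw [hB, single_slice hT k, ← hUt, ← hVm, ← hdiag k]
    simp only [Matrix.mul_assoc]
  refine ⟨fun k => Qm⁻¹ * Matrix.diagonal (fun l => w l k * (d l)⁻¹) * Qm, ?_, ?_, ?_⟩
  · intro k1 k2
    have key : ∀ f g : Fin r → K,
        (Qm⁻¹ * Matrix.diagonal f * Qm) * (Qm⁻¹ * Matrix.diagonal g * Qm)
          = Qm⁻¹ * Matrix.diagonal (fun l => f l * g l) * Qm := by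
      intro f g
      have h1 : Qm * (Qm⁻¹ * Matrix.diagonal g * Qm) = Matrix.diagonal g * Qm := by
        rw [← Matrix.mul_assoc, ← Matrix.mul_assoc, Matrix.mul_nonsing_inv Qm hdetQ,
          Matrix.one_mul]
      rw [Matrix.mul_assoc (Qm⁻¹ * Matrix.diagonal f), h1, ← Matrix.mul_assoc,
        Matrix.mul_assoc Qm⁻¹, Matrix.diagonal_mul_diagonal]
    show _ * _ = _ * _
    rw [key, key]
    have h2 : (fun l => w l k1 * (d l)⁻¹ * (w l k2 * (d l)⁻¹))
        = fun l => w l k2 * (d l)⁻¹ * (w l k1 * (d l)⁻¹) := by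
      funext l; ring
    rw [h2]
  · intro k
    ext i j
    rw [Matrix.submatrix_apply, hBNV k]
    simp only [Matrix.mul_apply]
    refine Finset.sum_congr rfl fun b _ => ?_
    rw [hcolV]
    congr 1
    exact Finset.sum_congr rfl fun a _ => by rw [hrowB]
  · intro k
    refine ⟨Qm⁻¹, (Matrix.isUnit_iff_isUnit_det _).mpr (Matrix.isUnit_nonsing_inv_det Qm hdetQ),
      fun l => w l k * (d l)⁻¹, ?_⟩
    rw [Matrix.nonsing_inv_nonsing_inv Qm hdetQ]
end

section
/- Let T be a tensor of format n × n × 3 over a field K with slices T_1, T_2, T_3, and suppose T_1 is invertible. Then rank(T) ≥ n + (1/2)·rank(T_2 T_1^{-1} T_3 − T_3 T_1^{-1} T_2). -/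
open Matrix BigOperators

variable {K : Type*} [Field K]

lemma matrixRank_add_le {m n : Type*} [Fintype m] [Fintype n] (A B : Matrix m n K) :
    (A + B).rank ≤ A.rank + B.rank := by
  classical
  have h : LinearMap.range (A + B).mulVecLin ≤
      LinearMap.range A.mulVecLin ⊔ LinearMap.range B.mulVecLin := by
    rw [Matrix.mulVecLin_add]
    rintro x ⟨y, rfl⟩
    exact Submodule.mem_sup.mpr ⟨A.mulVecLin y, ⟨y, rfl⟩, B.mulVecLin y, ⟨y, rfl⟩, rfl⟩
  exact le_trans (Submodule.finrank_mono h)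
    (Submodule.finrank_add_le_finrank_add_finrank _ _)

lemma sum_split {r : ℕ} (p : Fin r → Prop) [DecidablePred p] (f : Fin r → K) :
    ∑ l, f l = (∑ l : {x // p x}, f l.1) + ∑ l : {x // ¬ p x}, f l.1 :=
  (Fintype.sum_subtype_add_sum_subtype p f).symm

lemma card_split {r : ℕ} (p : Fin r → Prop) [DecidablePred p] :
    Fintype.card {x // p x} + Fintype.card {x // ¬ p x} = r := by
  classical
  rw [Fintype.card_subtype, Fintype.card_subtype]
  simpa using Finset.card_filter_add_card_filter_not (s := Finset.univ) (p := p)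

lemma abstract_bound {n : ℕ} {gd bd : Type*} [Fintype gd] [Fintype bd]
    [DecidableEq gd] [DecidableEq bd]
    (S0 S1 S2 : Matrix (Fin n) (Fin n) K) (hinv : IsUnit S0)
    (U1 : Matrix (Fin n) gd K) (V1 : Matrix gd (Fin n) K) (da db : gd → K)
    (Uz : Matrix (Fin n) bd K) (Vz : Matrix bd (Fin n) K) (za zb : bd → K)
    (h0 : S0 = U1 * V1)
    (h1 : S1 = U1 * Matrix.diagonal da * V1 + Uz * Matrix.diagonal za * Vz)
    (h2 : S2 = U1 * Matrix.diagonal db * V1 + Uz * Matrix.diagonal zb * Vz) :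
    (S1 * S0⁻¹ * S2 - S2 * S0⁻¹ * S1).rank + 2 * n
      ≤ 2 * (Fintype.card gd + Fintype.card bd) := by
  have hdet : IsUnit S0.det := (Matrix.isUnit_iff_isUnit_det _).mp hinv
  have hTG : S0 * S0⁻¹ = 1 := Matrix.mul_nonsing_inv _ hdet
  have hGT : S0⁻¹ * S0 = 1 := Matrix.nonsing_inv_mul _ hdet
  set E : Matrix gd gd K := 1 - V1 * S0⁻¹ * U1 with hE
  have hUE : U1 * E = 0 := by
    rw [hE, Matrix.mul_sub, Matrix.mul_one]
    have : U1 * (V1 * S0⁻¹ * U1) = S0 * S0⁻¹ * U1 := by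
      rw [h0]; simp only [Matrix.mul_assoc]
    rw [this, hTG, Matrix.one_mul, sub_self]
  -- rank facts
  have hrankU1 : n ≤ U1.rank := by
    have hS0 : S0.rank = n := by
      rw [Matrix.rank_of_isUnit S0 hinv, Fintype.card_fin]
    calc n = S0.rank := hS0.symm
    _ ≤ U1.rank := by rw [h0]; exact Matrix.rank_mul_le_left _ _
  have hEkn : E.rank + n ≤ Fintype.card gd := by
    have h := Matrix.rank_add_rank_le_card_of_mul_eq_zero hUE
    omega
  -- commutation of diagonals
  have hcomm : U1 * (Matrix.diagonal da * (Matrix.diagonal db * V1))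
      = U1 * (Matrix.diagonal db * (Matrix.diagonal da * V1)) := by
    have hdd : Matrix.diagonal da * Matrix.diagonal db
        = Matrix.diagonal db * Matrix.diagonal da := by
      rw [Matrix.diagonal_mul_diagonal, Matrix.diagonal_mul_diagonal]
      ext i j
      simp [Matrix.diagonal_apply, mul_comm]
    rw [← Matrix.mul_assoc (Matrix.diagonal da) (Matrix.diagonal db) V1, hdd,
      Matrix.mul_assoc]
  -- the key identity
  have key : S1 * S0⁻¹ * S2 - S2 * S0⁻¹ * S1 =
      (U1 * Matrix.diagonal db) * (E * (Matrix.diagonal da * V1))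
      + (U1 * Matrix.diagonal da) * (E * ((-(Matrix.diagonal db)) * V1))
      + Uz * (Matrix.diagonal za * (Vz * (S0⁻¹ * S2))
              - Matrix.diagonal zb * (Vz * (S0⁻¹ * S1)))
      + ((U1 * Matrix.diagonal da * V1) * (S0⁻¹ * (Uz * Matrix.diagonal zb))
         - (U1 * Matrix.diagonal db * V1) * (S0⁻¹ * (Uz * Matrix.diagonal za))) * Vz := by
    rw [hE]
    rw [h1, h2]
    simp only [Matrix.mul_add, Matrix.add_mul, Matrix.mul_sub, Matrix.sub_mul,
      Matrix.mul_one, Matrix.one_mul, Matrix.neg_mul, Matrix.mul_neg, Matrix.mul_assoc]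
    rw [hcomm]
    abel
  have r1 : ((U1 * Matrix.diagonal db) * (E * (Matrix.diagonal da * V1))).rank ≤ E.rank :=
    (Matrix.rank_mul_le_right _ _).trans (Matrix.rank_mul_le_left _ _)
  have r2 : ((U1 * Matrix.diagonal da) * (E * ((-(Matrix.diagonal db)) * V1))).rank ≤ E.rank :=
    (Matrix.rank_mul_le_right _ _).trans (Matrix.rank_mul_le_left _ _)
  have r3 : (Uz * (Matrix.diagonal za * (Vz * (S0⁻¹ * S2))
              - Matrix.diagonal zb * (Vz * (S0⁻¹ * S1)))).rank ≤ Fintype.card bd :=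
    (Matrix.rank_mul_le_left _ _).trans (Matrix.rank_le_card_width Uz)
  have r4 : (((U1 * Matrix.diagonal da * V1) * (S0⁻¹ * (Uz * Matrix.diagonal zb))
         - (U1 * Matrix.diagonal db * V1) * (S0⁻¹ * (Uz * Matrix.diagonal za))) * Vz).rank
        ≤ Fintype.card bd :=
    (Matrix.rank_mul_le_right _ _).trans (Matrix.rank_le_card_height Vz)
  have hX : (S1 * S0⁻¹ * S2 - S2 * S0⁻¹ * S1).rank
      ≤ E.rank + E.rank + Fintype.card bd + Fintype.card bd := by
    rw [key]
    refine le_trans (matrixRank_add_le _ _) ?_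
    refine add_le_add ?_ r4
    refine le_trans (matrixRank_add_le _ _) ?_
    refine add_le_add ?_ r3
    exact le_trans (matrixRank_add_le _ _) (add_le_add r1 r2)
  omega

lemma exists_decomp {n : ℕ} (T : Fin n → Fin n → Fin 3 → K) :
    ∃ u v w, tensorDecomp T (Fintype.card (Fin n × Fin n × Fin 3)) u v w := by
  classical
  set e := Fintype.equivFin (Fin n × Fin n × Fin 3) with he
  refine ⟨fun l i => if i = (e.symm l).1 then T (e.symm l).1 (e.symm l).2.1 (e.symm l).2.2 else 0,
          fun l j => if j = (e.symm l).2.1 then 1 else 0,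
          fun l k => if k = (e.symm l).2.2 then 1 else 0, ?_⟩
  intro i j k
  beta_reduce
  rw [Fintype.sum_equiv e.symm _
    (fun t : Fin n × Fin n × Fin 3 =>
      (if i = t.1 then T t.1 t.2.1 t.2.2 else 0) * (if j = t.2.1 then (1:K) else 0)
        * (if k = t.2.2 then (1:K) else 0)) (fun l => rfl)]
  simp [Fintype.sum_prod_type, mul_ite, ite_mul, zero_mul, mul_zero, eq_comm]

theorem strassen_lower_bound
    {n : ℕ} (T : Fin n → Fin n → Fin 3 → K)
    (hinv : IsUnit (zSlice T 0)) :
    (n : ℚ) + (1 / 2) *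
      ((zSlice T 1 * (zSlice T 0)⁻¹ * zSlice T 2 -
        zSlice T 2 * (zSlice T 0)⁻¹ * zSlice T 1).rank : ℚ)
      ≤ (tensorRank T : ℚ) := by
  classical
  have hne : {r | ∃ u v w, tensorDecomp T r u v w}.Nonempty := by
    obtain ⟨u, v, w, h⟩ := exists_decomp T
    exact ⟨_, u, v, w, h⟩
  have hmem : tensorRank T ∈ {r | ∃ u v w, tensorDecomp T r u v w} := by
    rw [tensorRank]; exact Nat.sInf_mem hne
  obtain ⟨u, v, w, hd⟩ := hmem
  have key := abstract_bound (zSlice T 0) (zSlice T 1) (zSlice T 2) hinv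
    (Matrix.of fun i (l : {x : Fin (tensorRank T) // w x 0 ≠ 0}) => w l.1 0 * u l.1 i)
    (Matrix.of fun (l : {x : Fin (tensorRank T) // w x 0 ≠ 0}) j => v l.1 j)
    (fun l => w l.1 1 / w l.1 0) (fun l => w l.1 2 / w l.1 0)
    (Matrix.of fun i (l : {x : Fin (tensorRank T) // ¬ w x 0 ≠ 0}) => u l.1 i)
    (Matrix.of fun (l : {x : Fin (tensorRank T) // ¬ w x 0 ≠ 0}) j => v l.1 j)
    (fun l => w l.1 1) (fun l => w l.1 2)
    ?_ ?_ ?_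
  · have hcard : Fintype.card {x : Fin (tensorRank T) // w x 0 ≠ 0}
        + Fintype.card {x : Fin (tensorRank T) // ¬ w x 0 ≠ 0} = tensorRank T :=
      card_split _
    have hfin : (zSlice T 1 * (zSlice T 0)⁻¹ * zSlice T 2 -
        zSlice T 2 * (zSlice T 0)⁻¹ * zSlice T 1).rank + 2 * n ≤ 2 * tensorRank T := by
      omega
    have h' : ((zSlice T 1 * (zSlice T 0)⁻¹ * zSlice T 2 -
        zSlice T 2 * (zSlice T 0)⁻¹ * zSlice T 1).rank : ℚ) + 2 * n ≤ 2 * tensorRank T := by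
      exact_mod_cast hfin
    linarith
  · -- h0
    ext i j
    rw [show (zSlice T 0) i j = T i j 0 from rfl, hd i j 0,
      sum_split (fun l => w l 0 ≠ 0) (fun l => u l i * v l j * w l 0)]
    have hz : ∑ l : {x : Fin (tensorRank T) // ¬ w x 0 ≠ 0},
        u l.1 i * v l.1 j * w l.1 0 = 0 :=
      Finset.sum_eq_zero (fun l _ => by rw [not_not.mp l.2]; ring)
    rw [hz, add_zero, Matrix.mul_apply]
    exact Finset.sum_congr rfl (fun l _ => by simp [Matrix.of_apply]; ring)
  · -- h1
    ext i j
    rw [show (zSlice T 1) i j = T i j 1 from rfl, hd i j 1,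
      sum_split (fun l => w l 0 ≠ 0) (fun l => u l i * v l j * w l 1), Matrix.add_apply]
    congr 1
    · rw [Matrix.mul_apply]
      refine Finset.sum_congr rfl (fun l _ => ?_)
      rw [Matrix.mul_diagonal]
      have hl := l.2
      simp only [Matrix.of_apply]
      field_simp
    · rw [Matrix.mul_apply]
      refine Finset.sum_congr rfl (fun l _ => ?_)
      rw [Matrix.mul_diagonal]
      simp only [Matrix.of_apply]
      ring
  · -- h2
    ext i j
    rw [show (zSlice T 2) i j = T i j 2 from rfl, hd i j 2,
      sum_split (fun l => w l 0 ≠ 0) (fun l => u l i * v l j * w l 2), Matrix.add_apply]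
    congr 1
    · rw [Matrix.mul_apply]
      refine Finset.sum_congr rfl (fun l _ => ?_)
      rw [Matrix.mul_diagonal]
      have hl := l.2
      simp only [Matrix.of_apply]
      field_simp
    · rw [Matrix.mul_apply]
      refine Finset.sum_congr rfl (fun l _ => ?_)
      rw [Matrix.mul_diagonal]
      simp only [Matrix.of_apply]
      ring
end

section
/- Let T be a tensor of format n × n × p over a field K of rank r, let λ ∈ K^p with λ_1 ≠ 0, and let T' be obtained from T by replacing the first slice with Σ_k λ_k T_k. If the decomposition of T' as a sum of r rank-one tensors is essentially unique (unique up to permutation of the rank-one summands and rescaling within each summand), then the decomposition of T as a sum of r rank-one tensors is also essentially unique. -/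
open Matrix BigOperators

variable {K : Type*} [Field K]

/-- A rank-`r` decomposition is essentially unique: any two decompositions agree up to
permutation of the rank-one summands. -/
def EssentiallyUnique {α β γ : Type*} [Fintype α] [Fintype β] [Fintype γ]
    (T : α → β → γ → K) (r : ℕ) : Prop :=
  ∀ u v w u' v' w', tensorDecomp T r u v w → tensorDecomp T r u' v' w' →
    ∃ σ : Equiv.Perm (Fin r), ∀ (i : Fin r) (a : α) (b : β) (c : γ),
      u (σ i) a * v (σ i) b * w (σ i) c = u' i a * v' i b * w' i c

theorem essentially_unique_of_replaced_first_slice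
    {n p r : ℕ} (T : Fin n → Fin n → Fin (p + 1) → K)
    (hrank : tensorRank T = r)
    (lam : Fin (p + 1) → K) (hlam : lam 0 ≠ 0)
    (T' : Fin n → Fin n → Fin (p + 1) → K)
    (h0 : ∀ i j, T' i j 0 = ∑ k, lam k * T i j k)
    (hrest : ∀ i j k, k ≠ 0 → T' i j k = T i j k)
    (hT' : EssentiallyUnique T' r) :
    EssentiallyUnique T r := by
  intro u v w u' v' w' hd hd'
  -- transform a decomposition of T into one of T'
  have key : ∀ (u v : Fin r → Fin n → K) (w : Fin r → Fin (p + 1) → K), tensorDecomp T r u v w →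
      tensorDecomp T' r u v (fun l k => if k = 0 then ∑ m, lam m * w l m else w l k) := by
    intro u v w hw i j k
    by_cases hk : k = 0
    · subst hk
      simp only [if_pos rfl, h0]
      calc ∑ m, lam m * T i j m = ∑ m, lam m * ∑ l, u l i * v l j * w l m :=
            Finset.sum_congr rfl fun m _ => by rw [hw]
        _ = ∑ m, ∑ l, u l i * v l j * (lam m * w l m) := by
            congr 1; ext m; rw [Finset.mul_sum]; congr 1; ext l; ring
        _ = ∑ l, ∑ m, u l i * v l j * (lam m * w l m) := Finset.sum_comm
        _ = ∑ l, u l i * v l j * ∑ m, lam m * w l m := by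
            congr 1; ext l; rw [Finset.mul_sum]
    · simp only [if_neg hk, hrest i j k hk, hw i j k]
  set wt := fun l k => if k = (0 : Fin (p+1)) then ∑ m, lam m * w l m else w l k with hwt
  set wt' := fun l k => if k = (0 : Fin (p+1)) then ∑ m, lam m * w' l m else w' l k with hwt'
  obtain ⟨σ, hσ⟩ := hT' u v wt u' v' wt' (key u v w hd) (key u' v' w' hd')
  refine ⟨σ, fun i a b c => ?_⟩
  by_cases hc : c = 0
  · subst hc
    have h0' := hσ i a b 0
    simp only [hwt, hwt', if_pos rfl] at h0'
    have hrest' : ∀ m : Fin (p+1), m ≠ 0 →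
        lam m * (u (σ i) a * v (σ i) b * w (σ i) m) =
        lam m * (u' i a * v' i b * w' i m) := by
      intro m hm
      have := hσ i a b m
      simp only [hwt, hwt', if_neg hm] at this
      rw [this]
    have hsum : ∑ m, lam m * (u (σ i) a * v (σ i) b * w (σ i) m) =
        ∑ m, lam m * (u' i a * v' i b * w' i m) := by
      calc ∑ m, lam m * (u (σ i) a * v (σ i) b * w (σ i) m)
          = u (σ i) a * v (σ i) b * ∑ m, lam m * w (σ i) m := by
            rw [Finset.mul_sum]; congr 1; ext m; ring
        _ = u' i a * v' i b * ∑ m, lam m * w' i m := h0'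
        _ = ∑ m, lam m * (u' i a * v' i b * w' i m) := by
            rw [Finset.mul_sum]; congr 1; ext m; ring
    have h00 : lam 0 * (u (σ i) a * v (σ i) b * w (σ i) 0) =
        lam 0 * (u' i a * v' i b * w' i 0) := by
      have := Finset.add_sum_erase Finset.univ
        (fun m => lam m * (u (σ i) a * v (σ i) b * w (σ i) m)) (Finset.mem_univ 0)
      have h2 := Finset.add_sum_erase Finset.univ
        (fun m => lam m * (u' i a * v' i b * w' i m)) (Finset.mem_univ 0)
      have herase : ∑ m ∈ Finset.univ.erase 0,
          lam m * (u (σ i) a * v (σ i) b * w (σ i) m) =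
          ∑ m ∈ Finset.univ.erase 0, lam m * (u' i a * v' i b * w' i m) :=
        Finset.sum_congr rfl fun m hm => hrest' m (Finset.ne_of_mem_erase hm)
      rw [← this, ← h2, herase] at hsum
      exact add_right_cancel hsum
    exact mul_left_cancel₀ hlam h00
  · have := hσ i a b c
    simp only [hwt, hwt', if_neg hc] at this
    exact this
end

section
/- Let T be a tensor of format m × n × p over a field K with slices T_1, …, T_p. Let T' be the tensor of format (m+n) × (m+n) × (p+1) whose first slice is the identity matrix I_{m+n} and whose remaining p slices are the block matrices A_i = [[0_{m×m}, T_i], [0_{n×m}, 0_{n×n}]]. Then rank(T') = rank(T) + m + n. -/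
open Matrix BigOperators

variable {K : Type*} [Field K]

section helpers

lemma span_top_of_pairing {ι : Type*} [Fintype ι] {q : ℕ} (f : ι → Fin q → K)
    (h : ∀ φ : Fin q → K, (∀ l, ∑ j, f l j * φ j = 0) → φ = 0) :
    Submodule.span K (Set.range f) = ⊤ := by
  by_contra hn
  obtain ⟨φ, hφne, hφ⟩ := Submodule.exists_dual_map_eq_bot_of_lt_top
    (lt_top_iff_ne_top.mpr hn) inferInstance
  set φv : Fin q → K := fun i => φ (fun j => if i = j then 1 else 0) with hφv
  have hz : ∀ l, ∑ j, f l j * φv j = 0 := by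
    intro l
    have hmem : f l ∈ Submodule.span K (Set.range f) :=
      Submodule.subset_span ⟨l, rfl⟩
    have : φ (f l) = 0 := by
      have := hφ ▸ Submodule.mem_map_of_mem (f := φ) hmem
      simpa using this
    rw [LinearMap.pi_apply_eq_sum_univ φ (f l)] at this
    simpa [mul_comm, smul_eq_mul] using this
  have : φv = 0 := h φv hz
  apply hφne
  apply LinearMap.ext
  intro x
  rw [LinearMap.pi_apply_eq_sum_univ φ x]
  have hx : ∀ i, φ (fun j => if i = j then 1 else 0) = 0 := by
    intro i
    have h2 := congrFun this i
    simpa [hφv] using h2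
  simp [hx]

lemma exists_indep_subfamily {ι : Type*} [Fintype ι] {q : ℕ} (f : ι → Fin q → K)
    (h : ∀ φ : Fin q → K, (∀ l, ∑ j, f l j * φ j = 0) → φ = 0) :
    ∃ g : Fin q → ι, Function.Injective g ∧ LinearIndependent K (f ∘ g) := by
  have hspan := span_top_of_pairing f h
  obtain ⟨b, hbsub, hbspan, hbind⟩ := exists_linearIndependent K (Set.range f)
  rw [hspan] at hbspan
  have hfin : b.Finite := Set.Finite.subset (Set.finite_range f) hbsub
  have := hfin.fintype
  have hcard : Fintype.card b = q := by
    classical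
    have := Module.finrank_eq_card_basis (Module.Basis.mk hbind (by rw [Subtype.range_coe, hbspan]))
    simpa [Module.finrank_fin_fun] using this.symm
  obtain ⟨e⟩ : Nonempty (Fin q ≃ b) := ⟨(Fintype.equivFinOfCardEq hcard).symm⟩
  have hpre : ∀ j : Fin q, ∃ l : ι, f l = (e j : Fin q → K) := fun j => hbsub (e j).2
  choose g hg using hpre
  refine ⟨g, ?_, ?_⟩
  · intro a a' haa
    have : (e a : Fin q → K) = (e a' : Fin q → K) := by rw [← hg, ← hg, haa]
    exact e.injective (Subtype.ext this)
  · have : f ∘ g = (fun x : b => (x : Fin q → K)) ∘ e := by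
      funext j; simp [Function.comp, hg]
    rw [this]
    exact hbind.comp e e.injective

lemma swap_sum {ι : Type*} [Fintype ι] {q : ℕ} (φ : Fin q → K) (a : ι → Fin q → K) (b : ι → K) :
    ∑ l, (∑ j, a l j * φ j) * b l = ∑ j, φ j * (∑ l, a l j * b l) := by
  simp_rw [Finset.sum_mul, Finset.mul_sum]
  rw [Finset.sum_comm]
  exact Finset.sum_congr rfl fun j _ => Finset.sum_congr rfl fun l _ => by ring

lemma sum_vanish {ι : Type*} [Fintype ι] {q : ℕ} (A : ι → K) (c : Fin q → K) (t : ι → Fin q → K)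
    (h : ∀ a, ∑ l, A l * t l a = 0) :
    ∑ l, A l * (∑ a, t l a * c a) = 0 := by
  have : ∑ l, A l * (∑ a, t l a * c a) = ∑ a, c a * (∑ l, A l * t l a) := by
    simp_rw [Finset.mul_sum]
    rw [Finset.sum_comm]
    exact Finset.sum_congr rfl fun a _ => Finset.sum_congr rfl fun l _ => by ring
  rw [this]
  simp [h]

lemma apply_coord {q q' : ℕ} (F : (Fin q → K) →ₗ[K] (Fin q' → K)) (v : Fin q → K) (i : Fin q') :
    F v i = ∑ b, v b * F (fun j' => if b = j' then 1 else 0) i := by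
  have h := LinearMap.pi_apply_eq_sum_univ ((LinearMap.proj i).comp F) v
  simpa [smul_eq_mul] using h

lemma exists_linearMap_of_indep {q q' : ℕ} (v : Fin q → (Fin q → K))
    (hv : LinearIndependent K v) (targ : Fin q → (Fin q' → K)) :
    ∃ F : (Fin q → K) →ₗ[K] (Fin q' → K), ∀ a, F (v a) = targ a := by
  rcases Nat.eq_zero_or_pos q with hq | hq
  · subst hq
    exact ⟨0, fun a => absurd a.2 (by omega)⟩
  · have : Nonempty (Fin q) := ⟨⟨0, hq⟩⟩
    have hcard : Fintype.card (Fin q) = Module.finrank K (Fin q → K) := by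
      simp [Module.finrank_fin_fun]
    let b := basisOfLinearIndependentOfCardEqFinrank hv hcard
    refine ⟨b.constr K targ, fun a => ?_⟩
    have hb : b a = v a := congrFun (coe_basisOfLinearIndependentOfCardEqFinrank hv hcard) a
    rw [← hb, Module.Basis.constr_basis]

lemma tensorDecomp_of_family {α β γ ι : Type*} [Fintype α] [Fintype β] [Fintype γ] [Fintype ι]
    (T : α → β → γ → K) (x : ι → α → K) (y : ι → β → K) (z : ι → γ → K)
    (h : ∀ i j k, T i j k = ∑ l : ι, x l i * y l j * z l k) :
    ∃ u v w, tensorDecomp T (Fintype.card ι) u v w := by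
  classical
  let e := (Fintype.equivFin ι).symm
  refine ⟨fun l => x (e l), fun l => y (e l), fun l => z (e l), fun i j k => ?_⟩
  rw [h i j k]
  exact (Equiv.sum_comp e (fun l => x l i * y l j * z l k)).symm

lemma tensorRank_le_card {α β γ ι : Type*} [Fintype α] [Fintype β] [Fintype γ] [Fintype ι]
    (T : α → β → γ → K) (x : ι → α → K) (y : ι → β → K) (z : ι → γ → K)
    (h : ∀ i j k, T i j k = ∑ l : ι, x l i * y l j * z l k) :
    tensorRank T ≤ Fintype.card ι :=
  Nat.sInf_le (tensorDecomp_of_family T x y z h)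

lemma tensorDecomp_nonempty {α β γ : Type*} [Fintype α] [Fintype β] [Fintype γ]
    [DecidableEq β] [DecidableEq γ] (T : α → β → γ → K) :
    {r | ∃ u v w, tensorDecomp T r u v w}.Nonempty := by
  classical
  refine ⟨Fintype.card (β × γ), tensorDecomp_of_family T
    (fun l i => T i l.1 l.2)
    (fun l j => if j = l.1 then 1 else 0)
    (fun l k => if k = l.2 then 1 else 0) ?_⟩
  intro i j k
  rw [Fintype.sum_prod_type]
  simp [Finset.sum_ite_eq', mul_ite]

lemma tensorRank_decomp {α β γ : Type*} [Fintype α] [Fintype β] [Fintype γ]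
    [DecidableEq β] [DecidableEq γ] (T : α → β → γ → K) :
    ∃ u v w, tensorDecomp T (tensorRank T) u v w :=
  Nat.sInf_mem (tensorDecomp_nonempty T)

end helpers

lemma lower_bound
    {m n p : ℕ} (T : Fin m → Fin n → Fin p → K)
    (T' : (Fin m ⊕ Fin n) → (Fin m ⊕ Fin n) → Fin (p + 1) → K)
    (h0 : ∀ i j, T' i j 0 = (1 : Matrix (Fin m ⊕ Fin n) (Fin m ⊕ Fin n) K) i j)
    (hrest : ∀ i j (k : Fin p), T' i j k.succ = Matrix.fromBlocks 0 (zSlice T k) 0 0 i j) :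
    tensorRank T + (m + n) ≤ tensorRank T' := by
  classical
  obtain ⟨x, y, z, hd⟩ := tensorRank_decomp T'
  have hS : ∀ i j k, ∑ l, x l i * (y l j * z l k) = T' i j k := fun i j k => by
    simpa [mul_assoc] using (hd i j k).symm
  have hid : ∀ i j, ∑ l, x l i * (y l j * z l 0) = if i = j then (1:K) else 0 := by
    intro i j
    rw [hS, h0, Matrix.one_apply]
  have hz1 : ∀ i a (k : Fin p),
      ∑ l, x l (Sum.inl i) * (y l (Sum.inl a) * z l k.succ) = 0 := by
    intro i a k; rw [hS, hrest]; simp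
  have hz3 : ∀ b j (k : Fin p),
      ∑ l, x l (Sum.inr b) * (y l (Sum.inr j) * z l k.succ) = 0 := by
    intro b j k; rw [hS, hrest]; simp
  have hz4 : ∀ b a (k : Fin p),
      ∑ l, x l (Sum.inr b) * (y l (Sum.inl a) * z l k.succ) = 0 := by
    intro b a k; rw [hS, hrest]; simp
  have hT : ∀ i j (k : Fin p),
      ∑ l, x l (Sum.inl i) * (y l (Sum.inr j) * z l k.succ) = T i j k := by
    intro i j k; rw [hS, hrest]; simp [zSlice]
  -- Step A : extract n indices with independent bottom x-parts
  have hspanS : ∀ φ : Fin n → K, (∀ l, ∑ j, x l (Sum.inr j) * φ j = 0) → φ = 0 := by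
    intro φ hφ
    funext j'
    have h1 := swap_sum φ (fun l j => x l (Sum.inr j)) (fun l => y l (Sum.inr j') * z l 0)
    simp only [hφ, zero_mul, Finset.sum_const_zero] at h1
    have h2 : (0:K) = ∑ j, φ j * (if (Sum.inr j : Fin m ⊕ Fin n) = Sum.inr j' then 1 else 0) :=
      h1.trans (Finset.sum_congr rfl fun j _ => by rw [hid])
    simpa [Sum.inr.injEq, Finset.sum_ite_eq'] using h2.symm
  obtain ⟨gr, hgrinj, hgrind⟩ := exists_indep_subfamily (fun l j => x l (Sum.inr j)) hspanS
  -- Step B : extract m indices, avoiding range gr, with independent top y-parts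
  have hspanT : ∀ ψ : Fin m → K,
      (∀ l : {l : Fin (tensorRank T') // l ∉ Set.range gr},
        ∑ i, y (l : Fin (tensorRank T')) (Sum.inl i) * ψ i = 0) → ψ = 0 := by
    intro ψ hψ
    have hψ' : ∀ l, l ∉ Set.range gr → ∑ i, y l (Sum.inl i) * ψ i = 0 :=
      fun l hl => hψ ⟨l, hl⟩
    set d : Fin (tensorRank T') → K :=
      fun l => (∑ i, y l (Sum.inl i) * ψ i) * z l 0 with hdd
    have hB1 : ∀ b : Fin n, ∑ l, d l * x l (Sum.inr b) = 0 := by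
      intro b
      have h2 : ∀ i : Fin m, ∑ l, y l (Sum.inl i) * (x l (Sum.inr b) * z l 0) = 0 := by
        intro i
        have h3 := hid (Sum.inr b) (Sum.inl i)
        rw [if_neg (by simp)] at h3
        rw [← h3]
        exact Finset.sum_congr rfl fun l _ => by ring
      calc ∑ l, d l * x l (Sum.inr b)
          = ∑ l, (∑ i, y l (Sum.inl i) * ψ i) * (x l (Sum.inr b) * z l 0) :=
            Finset.sum_congr rfl fun l _ => by rw [hdd]; ring
        _ = ∑ i, ψ i * (∑ l, y l (Sum.inl i) * (x l (Sum.inr b) * z l 0)) :=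
            swap_sum ψ (fun l i => y l (Sum.inl i)) (fun l => x l (Sum.inr b) * z l 0)
        _ = 0 := by simp [h2]
    have hdout : ∀ l, l ∉ Set.range gr → d l = 0 := by
      intro l hl
      rw [hdd]
      simp only []
      rw [hψ' l hl, zero_mul]
    have hcomb : ∀ b : Fin n, ∑ jj : Fin n, d (gr jj) * x (gr jj) (Sum.inr b) = 0 := by
      intro b
      have h5 : ∑ l ∈ Finset.univ.image gr, d l * x l (Sum.inr b)
          = ∑ jj, d (gr jj) * x (gr jj) (Sum.inr b) :=
        Finset.sum_image (fun a _ a' _ haa => hgrinj haa)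
      rw [← h5]
      have h6 : ∑ l ∈ Finset.univ.image gr, d l * x l (Sum.inr b)
          = ∑ l, d l * x l (Sum.inr b) := by
        apply Finset.sum_subset (Finset.subset_univ _)
        intro l _ hl
        have hnr : l ∉ Set.range gr := by
          intro ⟨a, ha⟩
          exact hl (Finset.mem_image.mpr ⟨a, Finset.mem_univ a, ha⟩)
        rw [hdout l hnr, zero_mul]
      rw [h6, hB1]
    have hsum0 : ∑ jj, (fun jj => d (gr jj)) jj • ((fun l j => x l (Sum.inr j)) ∘ gr) jj = 0 := by
      funext b
      have h8 := hcomb b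
      simpa [Finset.sum_apply, Pi.smul_apply, smul_eq_mul, Function.comp] using h8
    have hcoef := Fintype.linearIndependent_iff.mp hgrind (fun jj => d (gr jj)) hsum0
    have hdall : ∀ l, d l = 0 := by
      intro l
      by_cases hl : l ∈ Set.range gr
      · obtain ⟨jj, rfl⟩ := hl; exact hcoef jj
      · exact hdout l hl
    funext i'
    have hLHS : ∑ l, (∑ i, y l (Sum.inl i) * ψ i) * (x l (Sum.inl i') * z l 0) = 0 := by
      have : ∀ l, (∑ i, y l (Sum.inl i) * ψ i) * (x l (Sum.inl i') * z l 0)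
          = d l * x l (Sum.inl i') := fun l => by rw [hdd]; ring
      rw [Finset.sum_congr rfl fun l _ => this l]
      simp [hdall]
    have h1 := swap_sum ψ (fun l i => y l (Sum.inl i)) (fun l => x l (Sum.inl i') * z l 0)
    rw [hLHS] at h1
    have hRHS : ∀ i : Fin m, ∑ l, y l (Sum.inl i) * (x l (Sum.inl i') * z l 0)
        = if (Sum.inl i' : Fin m ⊕ Fin n) = Sum.inl i then (1:K) else 0 := by
      intro i
      rw [← hid (Sum.inl i') (Sum.inl i)]
      exact Finset.sum_congr rfl fun l _ => by ring
    rw [Finset.sum_congr rfl fun i _ => by rw [hRHS i]] at h1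
    simpa [Sum.inl.injEq, Finset.sum_ite_eq'] using h1.symm
  obtain ⟨gc0, hgc0inj, hgcind⟩ :=
    exists_indep_subfamily
      (fun (l : {l : Fin (tensorRank T') // l ∉ Set.range gr}) i =>
        y (l : Fin (tensorRank T')) (Sum.inl i)) hspanT
  set gc : Fin m → Fin (tensorRank T') := fun ii => (gc0 ii : Fin (tensorRank T')) with hgcdef
  have hgcinj : Function.Injective gc := by
    intro a b hab
    exact hgc0inj (Subtype.ext hab)
  have hgcnot : ∀ ii, gc ii ∉ Set.range gr := fun ii => (gc0 ii).2
  -- linear maps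
  obtain ⟨B, hB⟩ := exists_linearMap_of_indep (fun jj j => x (gr jj) (Sum.inr j)) hgrind
      (fun jj i => - x (gr jj) (Sum.inl i))
  obtain ⟨C, hC⟩ := exists_linearMap_of_indep (fun ii i => y (gc ii) (Sum.inl i)) hgcind
      (fun ii j => - y (gc ii) (Sum.inr j))
  set X : Fin (tensorRank T') → Fin m → K :=
    fun l i => x l (Sum.inl i) + B (fun j => x l (Sum.inr j)) i with hX
  set Y : Fin (tensorRank T') → Fin n → K :=
    fun l j => y l (Sum.inr j) + C (fun i => y l (Sum.inl i)) j with hY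
  have hXzero : ∀ jj, X (gr jj) = 0 := by
    intro jj
    funext i
    rw [hX]
    simp only []
    rw [hB jj]
    simp
  have hYzero : ∀ ii, Y (gc ii) = 0 := by
    intro ii
    funext j
    rw [hY]
    simp only []
    rw [hC ii]
    simp
  have hmain : ∀ i j (k : Fin p), T i j k = ∑ l, X l i * Y l j * z l k.succ := by
    intro i j k
    have hexp : ∀ l, X l i * Y l j * z l k.succ =
        x l (Sum.inl i) * (y l (Sum.inr j) * z l k.succ)
        + (x l (Sum.inl i) * z l k.succ) * (C (fun a => y l (Sum.inl a)) j)
        + (y l (Sum.inr j) * z l k.succ) * (B (fun b => x l (Sum.inr b)) i)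
        + ((B (fun b => x l (Sum.inr b)) i) * z l k.succ) * (C (fun a => y l (Sum.inl a)) j) := by
      intro l
      rw [hX, hY]
      ring
    rw [Finset.sum_congr rfl fun l _ => hexp l]
    rw [Finset.sum_add_distrib, Finset.sum_add_distrib, Finset.sum_add_distrib]
    have e2 : ∑ l, (x l (Sum.inl i) * z l k.succ) * (C (fun a => y l (Sum.inl a)) j) = 0 := by
      rw [Finset.sum_congr rfl fun l _ => by
        rw [apply_coord C (fun a => y l (Sum.inl a)) j]]
      apply sum_vanish
      intro a
      calc ∑ l, (x l (Sum.inl i) * z l k.succ) * y l (Sum.inl a)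
          = ∑ l, x l (Sum.inl i) * (y l (Sum.inl a) * z l k.succ) :=
            Finset.sum_congr rfl fun l _ => by ring
        _ = 0 := hz1 i a k
    have e3 : ∑ l, (y l (Sum.inr j) * z l k.succ) * (B (fun b => x l (Sum.inr b)) i) = 0 := by
      rw [Finset.sum_congr rfl fun l _ => by
        rw [apply_coord B (fun b => x l (Sum.inr b)) i]]
      apply sum_vanish
      intro b
      calc ∑ l, (y l (Sum.inr j) * z l k.succ) * x l (Sum.inr b)
          = ∑ l, x l (Sum.inr b) * (y l (Sum.inr j) * z l k.succ) :=
            Finset.sum_congr rfl fun l _ => by ring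
        _ = 0 := hz3 b j k
    have e4 : ∑ l, ((B (fun b => x l (Sum.inr b)) i) * z l k.succ)
        * (C (fun a => y l (Sum.inl a)) j) = 0 := by
      rw [Finset.sum_congr rfl fun l _ => by
        rw [apply_coord C (fun a => y l (Sum.inl a)) j]]
      apply sum_vanish
      intro a
      rw [Finset.sum_congr rfl fun l _ =>
        show (B (fun b => x l (Sum.inr b)) i * z l k.succ) * y l (Sum.inl a)
          = (y l (Sum.inl a) * z l k.succ) * (B (fun b => x l (Sum.inr b)) i) from by ring]
      rw [Finset.sum_congr rfl fun l _ => by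
        rw [apply_coord B (fun b => x l (Sum.inr b)) i]]
      apply sum_vanish
      intro b
      calc ∑ l, (y l (Sum.inl a) * z l k.succ) * x l (Sum.inr b)
          = ∑ l, x l (Sum.inr b) * (y l (Sum.inl a) * z l k.succ) :=
            Finset.sum_congr rfl fun l _ => by ring
        _ = 0 := hz4 b a k
    rw [hT i j k, e2, e3, e4]
    ring
  -- restrict to the complement of the two ranges
  set A : Finset (Fin (tensorRank T')) := Finset.univ.image gr ∪ Finset.univ.image gc with hA
  have hAcard : A.card = n + m := by
    rw [hA, Finset.card_union_of_disjoint]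
    · rw [Finset.card_image_of_injective _ hgrinj, Finset.card_image_of_injective _ hgcinj]
      simp
    · rw [Finset.disjoint_left]
      intro l hl hl2
      obtain ⟨jj, -, rfl⟩ := Finset.mem_image.mp hl
      obtain ⟨ii, -, hii⟩ := Finset.mem_image.mp hl2
      exact hgcnot ii ⟨jj, hii.symm⟩
  have hmain2 : ∀ i j (k : Fin p), T i j k = ∑ l ∈ Aᶜ, X l i * Y l j * z l k.succ := by
    intro i j k
    rw [hmain i j k]
    symm
    apply Finset.sum_subset (Finset.subset_univ _)
    intro l _ hl
    have hlA : l ∈ A := by simpa using hl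
    rcases Finset.mem_union.mp hlA with h | h
    · obtain ⟨jj, -, rfl⟩ := Finset.mem_image.mp h
      rw [hXzero jj]
      simp
    · obtain ⟨ii, -, rfl⟩ := Finset.mem_image.mp h
      rw [hYzero ii]
      simp
  have hdec : ∀ i j (k : Fin p), T i j k
      = ∑ l : {l // l ∈ Aᶜ}, X (l : Fin (tensorRank T')) i * Y (l : Fin (tensorRank T')) j
          * z (l : Fin (tensorRank T')) k.succ := by
    intro i j k
    rw [hmain2 i j k]
    exact (Finset.sum_coe_sort Aᶜ (fun l => X l i * Y l j * z l k.succ)).symm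
  have hle := tensorRank_le_card T
    (fun (l : {l // l ∈ Aᶜ}) => X (l : Fin (tensorRank T')))
    (fun l => Y (l : Fin (tensorRank T')))
    (fun l k' => z (l : Fin (tensorRank T')) k'.succ) hdec
  have hcard2 : Fintype.card {l // l ∈ Aᶜ} = tensorRank T' - (n + m) := by
    rw [Fintype.card_coe, Finset.card_compl, hAcard]
    simp
  have hnm : n + m ≤ tensorRank T' := by
    have h7 := Finset.card_le_univ A
    rw [hAcard] at h7
    simpa using h7
  rw [hcard2] at hle
  omega

lemma upper_bound
    {m n p : ℕ} (T : Fin m → Fin n → Fin p → K)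
    (T' : (Fin m ⊕ Fin n) → (Fin m ⊕ Fin n) → Fin (p + 1) → K)
    (h0 : ∀ i j, T' i j 0 = (1 : Matrix (Fin m ⊕ Fin n) (Fin m ⊕ Fin n) K) i j)
    (hrest : ∀ i j (k : Fin p), T' i j k.succ = Matrix.fromBlocks 0 (zSlice T k) 0 0 i j) :
    tensorRank T' ≤ tensorRank T + (m + n) := by
  classical
  obtain ⟨u, v, w, hd⟩ := tensorRank_decomp T
  have hle := tensorRank_le_card T'
    (Sum.elim (fun l : Fin (tensorRank T) => Sum.elim (u l) 0)
      (fun a : Fin m ⊕ Fin n => fun i => if i = a then 1 else 0))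
    (Sum.elim (fun l : Fin (tensorRank T) => Sum.elim 0 (v l))
      (fun a : Fin m ⊕ Fin n => fun j => if j = a then 1 else 0))
    (Sum.elim (fun l : Fin (tensorRank T) => Fin.cases 0 (w l))
      (fun _ : Fin m ⊕ Fin n => fun k => if k = 0 then 1 else 0))
    ?_
  · simpa [Fintype.card_sum] using hle
  intro i j k
  rw [Fintype.sum_sum_type]
  induction k using Fin.cases with
  | zero =>
    rw [h0]
    simp only [Sum.elim_inl, Sum.elim_inr, Fin.cases_zero, if_pos rfl]
    rw [Matrix.one_apply]
    simp [Finset.sum_ite_eq', eq_comm]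
  | succ k =>
    rw [hrest]
    have hz : ((if (k.succ : Fin (p+1)) = 0 then (1:K) else 0)) = 0 := by
      simp [Fin.succ_ne_zero]
    simp only [Sum.elim_inl, Sum.elim_inr, Fin.cases_succ, hz, mul_zero,
      Finset.sum_const_zero, add_zero]
    cases i with
    | inl i' =>
      cases j with
      | inl j' => simp [Matrix.fromBlocks]
      | inr j' =>
        simp only [Sum.elim_inl, Sum.elim_inr]
        rw [show Matrix.fromBlocks 0 (zSlice T k) 0 0 (Sum.inl i') (Sum.inr j')
          = T i' j' k from rfl]
        exact hd i' j' k
    | inr i' =>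
      cases j with
      | inl j' => simp [Matrix.fromBlocks]
      | inr j' => simp [Matrix.fromBlocks]

theorem shitov_padding_rank
    {m n p : ℕ} (T : Fin m → Fin n → Fin p → K)
    (T' : (Fin m ⊕ Fin n) → (Fin m ⊕ Fin n) → Fin (p + 1) → K)
    (h0 : ∀ i j, T' i j 0 = (1 : Matrix (Fin m ⊕ Fin n) (Fin m ⊕ Fin n) K) i j)
    (hrest : ∀ i j (k : Fin p), T' i j k.succ = Matrix.fromBlocks 0 (zSlice T k) 0 0 i j) :
    tensorRank T' = tensorRank T + m + n := by
  have h1 := upper_bound T T' h0 hrest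
  have h2 := lower_bound T T' h0 hrest
  omega
end

section
/- Let T be a tensor of format m × n × p over a field K of rank r, with slices T_1, …, T_p, and let T' be the tensor of format (m+n) × (m+n) × (p+1) whose first slice is I_{m+n} and whose remaining slices are A_i = [[0, T_i], [0, 0]] (block sizes m, n). Then T' admits a decomposition T' = Σ_{i=1}^{r+m+n} u'_i ⊗ v'_i ⊗ w'_i in which the first coordinate w'_{i1} of every vector w'_i ∈ K^{p+1} equals 1. -/
open Matrix BigOperators

variable {K : Type*} [Field K]

lemma exists_decomp_aux {m n p : ℕ} (T : Fin m → Fin n → Fin p → K) :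
    ∃ r u v w, tensorDecomp T r u v w := by
  classical
  set ι := Fin m × Fin n × Fin p
  let e : ι ≃ Fin (m * n * p) :=
    (Equiv.prodAssoc _ _ _).symm.trans
      ((finProdFinEquiv.prodCongr (Equiv.refl (Fin p))).trans finProdFinEquiv)
  let U : ι → Fin m → K := fun t i => if i = t.1 then 1 else 0
  let V : ι → Fin n → K := fun t j => if j = t.2.1 then 1 else 0
  let W : ι → Fin p → K := fun t k => if k = t.2.2 then T t.1 t.2.1 t.2.2 else 0
  refine ⟨m * n * p, U ∘ e.symm, V ∘ e.symm, W ∘ e.symm, fun i j k => ?_⟩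
  have := e.symm.sum_comp (fun t => U t i * V t j * W t k)
  simp only [Function.comp] at this ⊢
  rw [this]
  simp only [U, V, W]
  rw [Finset.sum_eq_single_of_mem (i, j, k) (Finset.mem_univ _)]
  · simp
  · rintro ⟨a, b, c⟩ - hne
    by_cases h1 : i = a <;> by_cases h2 : j = b <;> by_cases h3 : k = c <;>
      simp_all

theorem shitov_padding_decomposition_with_unit_first_coordinates
    {m n p r : ℕ} (T : Fin m → Fin n → Fin p → K)
    (hrank : tensorRank T = r)
    (T' : (Fin m ⊕ Fin n) → (Fin m ⊕ Fin n) → Fin (p + 1) → K)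
    (h0 : ∀ i j, T' i j 0 = (1 : Matrix (Fin m ⊕ Fin n) (Fin m ⊕ Fin n) K) i j)
    (hrest : ∀ i j (k : Fin p), T' i j k.succ = Matrix.fromBlocks 0 (zSlice T k) 0 0 i j) :
    ∃ (u' v' : Fin (r + m + n) → (Fin m ⊕ Fin n) → K)
      (w' : Fin (r + m + n) → Fin (p + 1) → K),
      tensorDecomp T' (r + m + n) u' v' w' ∧ ∀ i, w' i 0 = 1 := by
  classical
  obtain ⟨u, v, w, hT⟩ : ∃ u v w, tensorDecomp T r u v w := by
    rw [← hrank]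
    have hne : {r | ∃ u v w, tensorDecomp T r u v w}.Nonempty := by
      obtain ⟨r', u', v', w', h⟩ := exists_decomp_aux T
      exact ⟨r', u', v', w', h⟩
    exact Nat.sInf_mem hne
  set ι := Fin r ⊕ (Fin m ⊕ Fin n) with hι
  let Uu : Fin r → (Fin m ⊕ Fin n) → K := fun l => Sum.elim (u l) 0
  let Vv : Fin r → (Fin m ⊕ Fin n) → K := fun l => Sum.elim 0 (v l)
  let N : (Fin m ⊕ Fin n) → (Fin m ⊕ Fin n) → K :=
    fun i j => (if i = j then 1 else 0) - ∑ l, Uu l i * Vv l j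
  let U : ι → (Fin m ⊕ Fin n) → K :=
    Sum.elim Uu (fun i' j => if j = i' then 1 else 0)
  let V : ι → (Fin m ⊕ Fin n) → K := Sum.elim Vv N
  let W : ι → Fin (p + 1) → K :=
    Sum.elim (fun l => Fin.cases 1 (w l)) (fun _ => Fin.cases 1 fun _ => 0)
  have key : ∀ i j k, T' i j k = ∑ l : ι, U l i * V l j * W l k := by
    intro i j k
    induction k using Fin.cases with
    | zero =>
      rw [h0]
      rw [Fintype.sum_sum_type]
      simp only [U, V, W, Sum.elim_inl, Sum.elim_inr, Fin.cases_zero, mul_one]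
      have h2 : ∑ i' : Fin m ⊕ Fin n, (if i = i' then 1 else 0) * N i' j = N i j := by
        rw [Finset.sum_eq_single_of_mem i (Finset.mem_univ _)]
        · simp
        · intro b _ hb; simp [Ne.symm hb]
      rw [h2]
      simp only [N, Matrix.one_apply]
      ring
    | succ k =>
      rw [hrest]
      rw [Fintype.sum_sum_type]
      simp only [U, V, W, Sum.elim_inl, Sum.elim_inr, Fin.cases_succ, mul_zero,
        Finset.sum_const_zero, add_zero]
      cases i with
      | inl a =>
        cases j with
        | inl a' => simp [Uu, Vv, Matrix.fromBlocks]
        | inr b =>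
          simp only [Uu, Vv, Sum.elim_inl, Sum.elim_inr, Matrix.fromBlocks,
            Matrix.of_apply, zSlice]
          exact hT a b k
      | inr b =>
        cases j <;> simp [Uu, Vv, Matrix.fromBlocks]
  let e : ι ≃ Fin (r + m + n) :=
    (Equiv.sumAssoc (Fin r) (Fin m) (Fin n)).symm.trans
      ((finSumFinEquiv.sumCongr (Equiv.refl (Fin n))).trans finSumFinEquiv)
  refine ⟨U ∘ e.symm, V ∘ e.symm, W ∘ e.symm, fun i j k => ?_, fun i => ?_⟩
  · have := e.symm.sum_comp (fun l => U l i * V l j * W l k)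
    simp only [Function.comp] at this ⊢
    rw [this]
    exact key i j k
  · simp only [Function.comp, W]
    rcases e.symm i with l | l <;> simp
end
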